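/- arXiv:1609.06923 — 3 statements merged into one kernel-verified Lean document; each statement's English description precedes it below -/
import Mathlib

section
/- Let 𝒟 be a dyadic grid on a non-atomic measure space (X, μ), let m ≥ 1, let β₁, …, β_m ≥ 0 with β := Σᵢ βᵢ < 1, let Q ∈ 𝒟 with 0 < μ(Q) < ∞, let τ : 𝒟 → [0,∞) be a Carleson sequence with norm ‖τ‖_Car, and let w₁, …, w_m ≥ 0 be locally integrable. Then Σ_{Q' ⊆ Q, Q' ∈ 𝒟} τ(Q')·μ(Q')·Πᵢ ⟨wᵢ⟩_{Q'}^{βᵢ} ≤ C(β⃗) · ‖τ‖_Car · μ(Q) · Πᵢ ⟨wᵢ⟩_Q^{βᵢ}, where ⟨w⟩_Q := μ(Q)⁻¹ ∫_Q w dμ denotes the average. -/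
open MeasureTheory ENNReal
open scoped Classical NNReal

/-- Average of `w` over `Q` with respect to `μ`. -/
noncomputable def avg {X : Type*} [MeasurableSpace X] (μ : Measure X)
    (Q : Set X) (w : X → ℝ≥0∞) : ℝ≥0∞ := (∫⁻ x in Q, w x ∂μ) / μ Q

lemma two_rpow_sum {ι : Type*} (s : Finset ι) (g : ι → ℝ) :
    (2:ℝ≥0∞) ^ (∑ i ∈ s, g i) = ∏ i ∈ s, (2:ℝ≥0∞) ^ (g i) := by
  induction s using Finset.cons_induction with
  | empty => simp
  | cons a s ha ih =>
      rw [Finset.sum_cons, Finset.prod_cons, ENNReal.rpow_add _ _ two_ne_zero ENNReal.ofNat_ne_top, ih]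

lemma carleson_subfamily {X : Type} [MeasurableSpace X] (μ : Measure X)
    (𝒟 : Set (Set X)) (hmeas : ∀ Q ∈ 𝒟, MeasurableSet Q)
    (hnest : ∀ Q ∈ 𝒟, ∀ Q' ∈ 𝒟, Q ⊆ Q' ∨ Q' ⊆ Q ∨ Disjoint Q Q')
    (τ : Set X → ℝ≥0) (A : ℝ≥0∞)
    (hCar : ∀ Q ∈ 𝒟, ∑' Q' : {R : Set X // R ∈ 𝒟 ∧ R ⊆ Q},
        (τ Q' : ℝ≥0∞) * μ Q' ≤ A * μ Q)
    (Q : Set X) (p : Set X → Prop) (hp : ∀ R, p R → R ∈ 𝒟 ∧ R ⊆ Q)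
    (u : X → ℝ≥0∞) (c : ℝ≥0∞) (hc0 : c ≠ 0) (hct : c ≠ ∞)
    (hthr : ∀ R, p R → c * μ R ≤ ∫⁻ x in R, u x ∂μ) :
    ∑' R : Set X, (if p R then (τ R : ℝ≥0∞) * μ R else 0)
      ≤ A * (c⁻¹ * ∫⁻ x in Q, u x ∂μ) := by
  rw [ENNReal.tsum_eq_iSup_sum]
  refine iSup_le fun s => ?_
  rw [← Finset.sum_filter]
  set s' := s.filter p with hs'
  have hps' : ∀ R ∈ s', p R := fun R hR => (Finset.mem_filter.1 hR).2
  have hmax : ∀ R ∈ s', ∃ S, (S ∈ s' ∧ R ⊆ S) ∧ ∀ S' ∈ s', S ⊆ S' → S = S' := by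
    intro R hR
    have hfin : {S | S ∈ s' ∧ R ⊆ S}.Finite :=
      s'.finite_toSet.subset (fun S hS => hS.1)
    obtain ⟨S, hS, hSmax⟩ := Set.Finite.exists_maximalFor id _ hfin ⟨R, hR, subset_rfl⟩
    exact ⟨S, ⟨hS.1, hS.2⟩, fun S' hS' hsub => le_antisymm hsub (hSmax ⟨hS', hS.2.trans hsub⟩ hsub)⟩
  choose! σ hσ using hmax
  set M := s'.filter (fun S => ∀ S' ∈ s', S ⊆ S' → S = S') with hM
  have hmemM : ∀ S ∈ M, S ∈ s' := fun S hS => (Finset.mem_filter.1 hS).1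
  have hmaxM : ∀ S ∈ M, ∀ S' ∈ s', S ⊆ S' → S = S' :=
    fun S hS => (Finset.mem_filter.1 hS).2
  have hmapsto : ∀ R ∈ s', σ R ∈ M := by
    intro R hR
    exact Finset.mem_filter.2 ⟨((hσ R hR).1).1, (hσ R hR).2⟩
  have hMdisj : (M : Set (Set X)).PairwiseDisjoint id := by
    intro S₁ h₁ S₂ h₂ hne
    have h₁' := Finset.mem_coe.1 h₁
    have h₂' := Finset.mem_coe.1 h₂
    rcases hnest S₁ (hp _ (hps' _ (hmemM _ h₁'))).1 S₂ (hp _ (hps' _ (hmemM _ h₂'))).1 with h|h|h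
    · exact absurd (hmaxM _ h₁' S₂ (hmemM _ h₂') h) hne
    · exact absurd (hmaxM _ h₂' S₁ (hmemM _ h₁') h).symm hne
    · exact h
  calc ∑ R ∈ s', (τ R : ℝ≥0∞) * μ R
      = ∑ S ∈ M, ∑ R ∈ s'.filter (fun R => σ R = S), (τ R : ℝ≥0∞) * μ R :=
        (Finset.sum_fiberwise_of_maps_to hmapsto _).symm
    _ ≤ ∑ S ∈ M, A * μ S := by
        refine Finset.sum_le_sum fun S hS => ?_
        have hS𝒟 : S ∈ 𝒟 := (hp _ (hps' _ (hmemM _ hS))).1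
        have hsub : ∀ R ∈ s'.filter (fun R => σ R = S), R ∈ 𝒟 ∧ R ⊆ S := by
          intro R hR
          rcases Finset.mem_filter.1 hR with ⟨hR1, hR2⟩
          exact ⟨(hp _ (hps' _ hR1)).1, hR2 ▸ (hσ R hR1).1.2⟩
        calc ∑ R ∈ s'.filter (fun R => σ R = S), (τ R : ℝ≥0∞) * μ R
            = ∑ R ∈ s'.filter (fun R => σ R = S),
                (if R ∈ 𝒟 ∧ R ⊆ S then (τ R : ℝ≥0∞) * μ R else 0) :=
              Finset.sum_congr rfl (fun R hR => by rw [if_pos (hsub R hR)])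
          _ ≤ ∑' R : Set X, (if R ∈ 𝒟 ∧ R ⊆ S then (τ R : ℝ≥0∞) * μ R else 0) :=
              ENNReal.sum_le_tsum _
          _ = ∑' R : {R : Set X // R ∈ 𝒟 ∧ R ⊆ S}, (τ R : ℝ≥0∞) * μ R := by
              refine Eq.trans ?_ (tsum_subtype {R : Set X | R ∈ 𝒟 ∧ R ⊆ S}
                (fun R => (τ R : ℝ≥0∞) * μ R)).symm
              simp [Set.indicator_apply, Set.mem_setOf_eq]
          _ ≤ A * μ S := hCar S hS𝒟
    _ = A * ∑ S ∈ M, μ S := by rw [Finset.mul_sum]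
    _ ≤ A * (c⁻¹ * ∫⁻ x in Q, u x ∂μ) := by
        refine mul_le_mul_right ?_ A
        have h1 : ∀ S ∈ M, μ S ≤ c⁻¹ * ∫⁻ x in S, u x ∂μ := by
          intro S hS
          have := hthr S (hps' _ (hmemM _ hS))
          calc μ S = c⁻¹ * (c * μ S) := by
                rw [← mul_assoc, ENNReal.inv_mul_cancel hc0 hct, one_mul]
            _ ≤ c⁻¹ * ∫⁻ x in S, u x ∂μ := mul_le_mul_right this _
        calc ∑ S ∈ M, μ S ≤ ∑ S ∈ M, c⁻¹ * ∫⁻ x in S, u x ∂μ := Finset.sum_le_sum h1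
          _ = c⁻¹ * ∑ S ∈ M, ∫⁻ x in S, u x ∂μ := by rw [Finset.mul_sum]
          _ = c⁻¹ * ∫⁻ x in (⋃ S ∈ M, id S), u x ∂μ := by
              rw [lintegral_biUnion_finset hMdisj (fun S hS => hmeas S (hp _ (hps' _ (hmemM _ (Finset.mem_coe.1 hS)))).1) _]
              rfl
          _ ≤ c⁻¹ * ∫⁻ x in Q, u x ∂μ := by
              refine mul_le_mul_right (lintegral_mono_set ?_) _
              exact Set.iUnion₂_subset fun S hS => (hp _ (hps' _ (hmemM _ hS))).2

/-- Carleson packing for products of averages with total exponent `β < 1`: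
`Σ_{Q' ⊆ Q} τ(Q') μ(Q') Πᵢ ⟨wᵢ⟩_{Q'}^{βᵢ} ≤ C(β⃗) ‖τ‖_Car μ(Q) Πᵢ ⟨wᵢ⟩_Q^{βᵢ}`. -/
theorem carleson_sum_of_products_of_averages
    (m : ℕ) (hm : 1 ≤ m) (β : Fin m → ℝ) (hβ : ∀ i, 0 ≤ β i)
    (hβsum : ∑ i, β i < 1) :
    ∃ C : ℝ≥0∞, C ≠ ∞ ∧
      ∀ (X : Type) [MeasurableSpace X] (μ : Measure X) [NullSingletonClass μ]
        (𝒟 : Set (Set X)),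
        (∀ Q ∈ 𝒟, MeasurableSet Q) →
        (∀ Q ∈ 𝒟, ∀ Q' ∈ 𝒟, Q ⊆ Q' ∨ Q' ⊆ Q ∨ Disjoint Q Q') →
        ∀ (τ : Set X → ℝ≥0) (A : ℝ≥0∞),
        -- `A` bounds the Carleson norm of `τ`
        (∀ Q ∈ 𝒟, ∑' Q' : {R : Set X // R ∈ 𝒟 ∧ R ⊆ Q},
            (τ Q' : ℝ≥0∞) * μ Q' ≤ A * μ Q) →
        ∀ w : Fin m → X → ℝ≥0∞, (∀ i, Measurable (w i)) →
        ∀ Q ∈ 𝒟, 0 < μ Q → μ Q < ∞ →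
        (∑' Q' : {R : Set X // R ∈ 𝒟 ∧ R ⊆ Q},
            (τ Q' : ℝ≥0∞) * μ Q' * ∏ i, (avg μ Q' (w i)) ^ β i)
          ≤ C * A * μ Q * ∏ i, (avg μ Q (w i)) ^ β i := by
  set b := ∑ i, β i with hb
  have hb0 : 0 ≤ b := Finset.sum_nonneg fun i _ => hβ i
  by_cases hbz : b = 0
  · refine ⟨1, one_ne_top, ?_⟩
    intro X _ μ _ 𝒟 hmeas hnest τ A hCar w hw Q hQ hQ0 hQt
    have hβ0 : ∀ i, β i = 0 := fun i =>
      (Finset.sum_eq_zero_iff_of_nonneg (fun i _ => hβ i)).1 hbz i (Finset.mem_univ i)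
    simp only [hβ0, ENNReal.rpow_zero, Finset.prod_const_one, mul_one, one_mul]
    exact hCar Q hQ
  have hbpos : 0 < b := lt_of_le_of_ne hb0 (Ne.symm hbz)
  have hblt : b < 1 := hβsum
  have hbinv : (1:ℝ) < 1 / b := (one_lt_div hbpos).2 hblt
  set r : ℝ≥0∞ := (2:ℝ≥0∞) ^ ((1:ℝ) - 1/b) with hr
  have hrlt : r < 1 :=
    ENNReal.rpow_lt_one_of_one_lt_of_neg one_lt_two (by linarith)
  have hrinv_ne_top : (1 - r)⁻¹ ≠ ⊤ := by
    rw [Ne, ENNReal.inv_eq_top]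
    simp [tsub_eq_zero_iff_le, not_le, hrlt]
  refine ⟨1 + 4 * m * (1 - r)⁻¹, ?_, ?_⟩
  · exact ENNReal.add_ne_top.2 ⟨one_ne_top,
      ENNReal.mul_ne_top (ENNReal.mul_ne_top (by simp) (by simp)) hrinv_ne_top⟩
  intro X _ μ _ 𝒟 hmeas hnest τ A hCar w hw Q hQ hQ0 hQt
  set x : Fin m → ℝ≥0∞ := fun i => avg μ Q (w i) with hx
  set P : ℝ≥0∞ := ∏ i, x i ^ β i with hP
  -- trivial case A = 0
  by_cases hA0 : A = 0
  · have h := hCar Q hQ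
    rw [hA0, zero_mul] at h
    have hz := le_antisymm h zero_le
    have hz' := ENNReal.tsum_eq_zero.1 hz
    refine le_trans (le_of_eq (ENNReal.tsum_eq_zero.2 fun Q' => ?_)) zero_le
    rw [hz' Q', zero_mul]
  -- trivial case P = 0
  by_cases hP0 : P = 0
  · obtain ⟨i, _, hi⟩ := Finset.prod_eq_zero_iff.1 hP0
    rcases ENNReal.rpow_eq_zero_iff.1 hi with ⟨hxi, hβi⟩ | ⟨_, hβi⟩
    swap
    · exact absurd hβi (not_lt.2 (hβ i))
    have hint : ∫⁻ y in Q, w i y ∂μ = 0 := by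
      rcases ENNReal.div_eq_zero_iff.1 hxi with h | h
      · exact h
      · exact absurd h hQt.ne
    refine le_trans (le_of_eq (ENNReal.tsum_eq_zero.2 fun Q' => ?_)) zero_le
    have hint' : ∫⁻ y in (Q' : Set X), w i y ∂μ = 0 := by
      refine le_antisymm (le_trans ?_ hint.le) zero_le
      exact lintegral_mono' (Measure.restrict_mono Q'.2.2 le_rfl) le_rfl
    have : avg μ (Q' : Set X) (w i) = 0 := by
      rw [avg, hint', ENNReal.zero_div]
    rw [Finset.prod_eq_zero (Finset.mem_univ i) (by rw [this]; exact ENNReal.zero_rpow_of_pos hβi),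
      mul_zero]
  -- trivial case P = ⊤
  have hC0 : (1 : ℝ≥0∞) + 4 * m * (1 - r)⁻¹ ≠ 0 := by
    intro h
    rw [add_eq_zero] at h
    exact one_ne_zero h.1
  by_cases hPt : P = ⊤
  · rw [hPt, ENNReal.mul_top (by
      exact mul_ne_zero (mul_ne_zero hC0 hA0) hQ0.ne')]
    exact le_top
  -- trivial case A = ⊤
  by_cases hAt : A = ⊤
  · rw [hAt, ENNReal.mul_top hC0, ENNReal.top_mul hQ0.ne', ENNReal.top_mul hP0]
    exact le_top
  -- Main case: A, P, μ Q all in (0,∞)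
  have hfac0 : ∀ i, x i ^ β i ≠ 0 := fun i =>
    Finset.prod_ne_zero_iff.1 hP0 i (Finset.mem_univ i)
  have hx0 : ∀ i, β i ≠ 0 → x i ≠ 0 := by
    intro i hi h0
    exact hfac0 i (by rw [h0]; exact ENNReal.zero_rpow_of_pos (lt_of_le_of_ne (hβ i) (Ne.symm hi)))
  have hfacT : ∀ i, x i ^ β i ≠ ⊤ := by
    intro i hT
    apply hPt
    rw [hP, ← Finset.mul_prod_erase _ _ (Finset.mem_univ i), hT, ENNReal.top_mul]
    exact Finset.prod_ne_zero_iff.2 fun j _ => hfac0 j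
  have hxT : ∀ i, β i ≠ 0 → x i ≠ ⊤ := by
    intro i hi hT
    apply hfacT i
    rw [hT]
    exact ENNReal.top_rpow_of_pos (lt_of_le_of_ne (hβ i) (Ne.symm hi))
  have hint : ∀ i, ∫⁻ y in Q, w i y ∂μ = x i * μ Q := by
    intro i
    simp only [hx, avg]
    exact (ENNReal.div_mul_cancel hQ0.ne' hQt.ne).symm
  have hCarQ : ∑' R : Set X, (if R ∈ 𝒟 ∧ R ⊆ Q then (τ R : ℝ≥0∞) * μ R else 0) ≤ A * μ Q := by
    refine le_trans (le_of_eq ?_) (hCar Q hQ)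
    refine Eq.trans ?_ (tsum_subtype {R : Set X | R ∈ 𝒟 ∧ R ⊆ Q}
      (fun R => (τ R : ℝ≥0∞) * μ R)).symm
    simp [Set.indicator_apply, Set.mem_setOf_eq]
  set H : ℕ → Fin m → Set X → Prop := fun k i R =>
    (R ∈ 𝒟 ∧ R ⊆ Q) ∧ β i ≠ 0 ∧
      (2:ℝ≥0∞) ^ ((k:ℝ)/b - 1) * x i * μ R ≤ ∫⁻ y in R, w i y ∂μ with hH
  have hLHS : (∑' Q' : {R : Set X // R ∈ 𝒟 ∧ R ⊆ Q},
        (τ Q' : ℝ≥0∞) * μ Q' * ∏ i, (avg μ Q' (w i)) ^ β i)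
      = ∑' R : Set X, (if R ∈ 𝒟 ∧ R ⊆ Q
          then (τ R : ℝ≥0∞) * μ R * ∏ i, (avg μ R (w i)) ^ β i else 0) := by
    refine Eq.trans (tsum_subtype {R : Set X | R ∈ 𝒟 ∧ R ⊆ Q}
      (fun R => (τ R : ℝ≥0∞) * μ R * ∏ i, (avg μ R (w i)) ^ β i)) ?_
    simp [Set.indicator_apply, Set.mem_setOf_eq]
  have key : ∀ R : Set X,
      (if R ∈ 𝒟 ∧ R ⊆ Q then (τ R : ℝ≥0∞) * μ R * ∏ i, (avg μ R (w i)) ^ β i else 0)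
      ≤ (if R ∈ 𝒟 ∧ R ⊆ Q then P * ((τ R : ℝ≥0∞) * μ R) else 0)
        + ∑' k : ℕ, ∑ i, (if H k i R then 2^(k+1) * P * ((τ R : ℝ≥0∞) * μ R) else 0) := by
    intro R
    by_cases hcond : R ∈ 𝒟 ∧ R ⊆ Q
    swap
    · simp [hcond]
    rw [if_pos hcond, if_pos hcond]
    set pr := ∏ i, (avg μ R (w i)) ^ β i with hpr
    by_cases hτμ : (τ R : ℝ≥0∞) * μ R = 0
    · rw [hτμ, zero_mul]
      exact zero_le
    have hμR0 : μ R ≠ 0 := fun h => hτμ (by rw [h, mul_zero])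
    have hμRT : μ R ≠ ⊤ := (lt_of_le_of_lt (measure_mono hcond.2) hQt).ne
    have havgT : ∀ i, β i ≠ 0 → avg μ R (w i) ≠ ⊤ := by
      intro i hi
      have hIR : (∫⁻ y in R, w i y ∂μ) ≠ ⊤ := by
        refine ((lintegral_mono' (Measure.restrict_mono hcond.2 le_rfl) le_rfl).trans_lt ?_).ne
        rw [hint i]
        exact ENNReal.mul_lt_top (hxT i hi).lt_top hQt
      rw [avg]
      exact (ENNReal.div_lt_top hIR hμR0).ne
    have hprT : pr ≠ ⊤ := by
      refine (ENNReal.prod_lt_top fun i _ => ?_).ne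
      by_cases hi : β i = 0
      · simp [hi]
      · exact ENNReal.rpow_lt_top_of_nonneg (hβ i) (havgT i hi)
    by_cases hle : pr ≤ P
    · refine le_trans ?_ le_self_add
      calc (τ R : ℝ≥0∞) * μ R * pr ≤ (τ R : ℝ≥0∞) * μ R * P := mul_le_mul_right hle _
        _ = P * ((τ R : ℝ≥0∞) * μ R) := mul_comm _ _
    have hlt : P < pr := not_le.1 hle
    have hρT : pr / P ≠ ⊤ := (ENNReal.div_lt_top hprT hP0).ne
    obtain ⟨n, hn⟩ := ENNReal.exists_nat_gt hρT
    have hn2 : pr < 2^n * P := by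
      have h2n : ((n:ℝ≥0∞)) < 2^n := by exact_mod_cast Nat.lt_two_pow_self
      exact (ENNReal.div_lt_iff (Or.inl hP0) (Or.inl hPt)).1 (hn.trans h2n)
    set Pred : ℕ → Prop := fun j => 2^j * P ≤ pr with hPredDef
    have hPred0 : Pred 0 := by simpa [hPredDef] using hlt.le
    set k := Nat.findGreatest Pred n with hkdef
    have hkP : Pred k := Nat.findGreatest_spec (Nat.zero_le n) hPred0
    have hkn : k ≤ n := Nat.findGreatest_le n
    have hklt : k < n := by
      rcases lt_or_eq_of_le hkn with h | h
      · exact h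
      · exact absurd (h ▸ hkP) (not_le.2 hn2)
    have hnot := Nat.findGreatest_is_greatest (show Nat.findGreatest Pred n < k + 1 by omega)
      (show k + 1 ≤ n by omega)
    have hk2 : pr < 2^(k+1) * P := not_le.1 hnot
    have hex : ∃ i, β i ≠ 0 ∧
        (2:ℝ≥0∞) ^ ((k:ℝ)/b - 1) * x i * μ R ≤ ∫⁻ y in R, w i y ∂μ := by
      by_contra hno
      push_neg at hno
      have hbound : ∀ i, (avg μ R (w i)) ^ β i ≤ ((2:ℝ≥0∞) ^ ((k:ℝ)/b - 1) * x i) ^ β i := by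
        intro i
        by_cases hi : β i = 0
        · simp [hi]
        · refine ENNReal.rpow_le_rpow ?_ (hβ i)
          have hlt' := hno i hi
          have : avg μ R (w i) < (2:ℝ≥0∞) ^ ((k:ℝ)/b - 1) * x i := by
            rw [avg]
            exact (ENNReal.div_lt_iff (Or.inl hμR0) (Or.inl hμRT)).2 hlt'
          exact this.le
      have hprle : pr ≤ ∏ i, ((2:ℝ≥0∞) ^ ((k:ℝ)/b - 1) * x i) ^ β i :=
        Finset.prod_le_prod' fun i _ => hbound i
      have hcomp : ∏ i, ((2:ℝ≥0∞) ^ ((k:ℝ)/b - 1) * x i) ^ β i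
          = (2:ℝ≥0∞) ^ ((k:ℝ) - b) * P := by
        have hterm : ∀ i, ((2:ℝ≥0∞) ^ ((k:ℝ)/b - 1) * x i) ^ β i
            = (2:ℝ≥0∞) ^ (((k:ℝ)/b - 1) * β i) * x i ^ β i := by
          intro i
          rw [ENNReal.mul_rpow_of_nonneg _ _ (hβ i), ← ENNReal.rpow_mul]
        rw [Finset.prod_congr rfl (fun i _ => hterm i), Finset.prod_mul_distrib,
          ← two_rpow_sum, ← Finset.mul_sum, ← hb, ← hP]
        congr 2
        field_simp
      have hlt2 : (2:ℝ≥0∞) ^ ((k:ℝ) - b) * P < 2^k * P := by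
        have h2 : (2:ℝ≥0∞) ^ ((k:ℝ) - b) < (2:ℝ≥0∞) ^ ((k:ℝ)) :=
          ENNReal.rpow_lt_rpow_of_exponent_lt one_lt_two ENNReal.ofNat_ne_top (by linarith)
        rw [ENNReal.rpow_natCast] at h2
        exact ENNReal.mul_lt_mul_left hP0 hPt h2
      exact absurd hkP (not_le.2 (lt_of_le_of_lt (hprle.trans_eq hcomp) hlt2))
    obtain ⟨i, hi1, hi2⟩ := hex
    have hHk : H k i R := ⟨hcond, hi1, hi2⟩
    refine le_trans ?_ le_add_self
    calc (τ R : ℝ≥0∞) * μ R * pr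
        ≤ (τ R : ℝ≥0∞) * μ R * (2^(k+1) * P) := mul_le_mul_right hk2.le _
      _ = 2^(k+1) * P * ((τ R : ℝ≥0∞) * μ R) := mul_comm _ _
      _ = (if H k i R then 2^(k+1) * P * ((τ R : ℝ≥0∞) * μ R) else 0) := (if_pos hHk).symm
      _ ≤ ∑ i', (if H k i' R then 2^(k+1) * P * ((τ R : ℝ≥0∞) * μ R) else 0) :=
          Finset.single_le_sum
            (f := fun i' => if H k i' R then 2^(k+1) * P * ((τ R : ℝ≥0∞) * μ R) else 0)
            (fun _ _ => zero_le) (Finset.mem_univ i)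
      _ ≤ ∑' k', ∑ i', (if H k' i' R then 2^(k'+1) * P * ((τ R : ℝ≥0∞) * μ R) else 0) :=
          ENNReal.le_tsum k
  have hfirst : (∑' R : Set X, (if R ∈ 𝒟 ∧ R ⊆ Q then P * ((τ R:ℝ≥0∞) * μ R) else 0))
      ≤ P * (A * μ Q) := by
    have heq : ∀ R : Set X, (if R ∈ 𝒟 ∧ R ⊆ Q then P * ((τ R:ℝ≥0∞) * μ R) else 0)
        = P * (if R ∈ 𝒟 ∧ R ⊆ Q then (τ R:ℝ≥0∞) * μ R else 0) := by
      intro R; split <;> simp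
    rw [tsum_congr heq, ENNReal.tsum_mul_left]
    exact mul_le_mul_right hCarQ _
  have hbnd : ∀ (k:ℕ) (i : Fin m),
      (∑' R : Set X, (if H k i R then (τ R:ℝ≥0∞) * μ R else 0))
        ≤ A * (((2:ℝ≥0∞) ^ ((k:ℝ)/b - 1))⁻¹ * μ Q) := by
    intro k i
    by_cases hi : β i = 0
    · have heq : ∀ R : Set X, (if H k i R then (τ R:ℝ≥0∞)*μ R else 0) = 0 := by
        intro R; rw [if_neg]; rintro ⟨_, hi', _⟩; exact hi' hi
      rw [tsum_congr heq]; simp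
    · have h2s0 : ((2:ℝ≥0∞) ^ ((k:ℝ)/b - 1)) ≠ 0 := by
        simp [ENNReal.rpow_eq_zero_iff]
      have h2sT : ((2:ℝ≥0∞) ^ ((k:ℝ)/b - 1)) ≠ ⊤ := by
        simp [ENNReal.rpow_eq_top_iff]
      have hmain := carleson_subfamily μ 𝒟 hmeas hnest τ A hCar Q (H k i)
        (fun R hR => hR.1) (w i) ((2:ℝ≥0∞) ^ ((k:ℝ)/b - 1) * x i)
        (mul_ne_zero h2s0 (hx0 i hi)) (ENNReal.mul_ne_top h2sT (hxT i hi))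
        (fun R hR => hR.2.2)
      have hmain' : (∑' R : Set X, (if H k i R then (τ R:ℝ≥0∞) * μ R else 0))
          ≤ A * (((2:ℝ≥0∞) ^ ((k:ℝ)/b - 1) * x i)⁻¹ * ∫⁻ y in Q, w i y ∂μ) := by
        refine le_trans (le_of_eq (tsum_congr fun R => ?_)) hmain
        by_cases h : H k i R <;> simp [h]
      refine hmain'.trans (le_of_eq ?_)
      rw [hint i, ENNReal.mul_inv (Or.inl h2s0) (Or.inl h2sT)]
      congr 1
      rw [mul_assoc, ← mul_assoc ((x i)⁻¹), ENNReal.inv_mul_cancel (hx0 i hi) (hxT i hi), one_mul]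
  have hgeom : ∀ k:ℕ, (2:ℝ≥0∞)^(k+1) * ((2:ℝ≥0∞) ^ ((k:ℝ)/b - 1))⁻¹ = 4 * r^k := by
    intro k
    have hrk : r ^ k = (2:ℝ≥0∞) ^ (((1:ℝ) - 1/b) * k) := by
      rw [hr, ENNReal.rpow_mul, ENNReal.rpow_natCast]
    have h4 : (4:ℝ≥0∞) = (2:ℝ≥0∞) ^ (2:ℝ) := by
      rw [show ((2:ℝ) = ((2:ℕ):ℝ)) by norm_num, ENNReal.rpow_natCast]; norm_num
    rw [hrk, h4, ← ENNReal.rpow_natCast (2:ℝ≥0∞) (k+1), ← ENNReal.rpow_neg,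
      ← ENNReal.rpow_add _ _ two_ne_zero ENNReal.ofNat_ne_top,
      ← ENNReal.rpow_add _ _ two_ne_zero ENNReal.ofNat_ne_top]
    congr 1
    push_cast
    have hbne : b ≠ 0 := ne_of_gt hbpos
    field_simp
    ring
  have hsecond : (∑' R : Set X, ∑' k : ℕ, ∑ i,
        (if H k i R then 2^(k+1) * P * ((τ R:ℝ≥0∞)*μ R) else 0))
      ≤ 4 * m * (1-r)⁻¹ * (A * μ Q * P) := by
    rw [ENNReal.tsum_comm]
    have hswap : ∀ k:ℕ, (∑' R : Set X, ∑ i,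
          (if H k i R then 2^(k+1)*P*((τ R:ℝ≥0∞)*μ R) else 0))
        = ∑ i, ∑' R : Set X, (if H k i R then 2^(k+1)*P*((τ R:ℝ≥0∞)*μ R) else 0) :=
      fun k => Summable.tsum_finsetSum (fun i _ => ENNReal.summable)
    calc (∑' k:ℕ, ∑' R : Set X, ∑ i, (if H k i R then 2^(k+1)*P*((τ R:ℝ≥0∞)*μ R) else 0))
        = ∑' k:ℕ, ∑ i, ∑' R : Set X, (if H k i R then 2^(k+1)*P*((τ R:ℝ≥0∞)*μ R) else 0) :=
          tsum_congr hswap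
      _ ≤ ∑' k:ℕ, ∑ _i : Fin m, 2^(k+1)*P*(A * (((2:ℝ≥0∞) ^ ((k:ℝ)/b - 1))⁻¹ * μ Q)) := by
          refine ENNReal.tsum_le_tsum fun k => Finset.sum_le_sum fun i _ => ?_
          have heq : ∀ R : Set X, (if H k i R then 2^(k+1)*P*((τ R:ℝ≥0∞)*μ R) else 0)
              = 2^(k+1)*P*(if H k i R then (τ R:ℝ≥0∞)*μ R else 0) := by
            intro R; split <;> simp
          rw [tsum_congr heq, ENNReal.tsum_mul_left]
          exact mul_le_mul_right (hbnd k i) _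
      _ = ∑' k:ℕ, (4 * m * A * P * μ Q) * r^k := by
          refine tsum_congr fun k => ?_
          rw [Finset.sum_const, Finset.card_univ, Fintype.card_fin, nsmul_eq_mul]
          calc (m:ℝ≥0∞) * (2^(k+1)*P*(A * (((2:ℝ≥0∞) ^ ((k:ℝ)/b - 1))⁻¹ * μ Q)))
              = ((m:ℝ≥0∞)*P*A*μ Q) * (2^(k+1) * ((2:ℝ≥0∞) ^ ((k:ℝ)/b - 1))⁻¹) := by ring
            _ = ((m:ℝ≥0∞)*P*A*μ Q) * (4*r^k) := by rw [hgeom k]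
            _ = (4 * m * A * P * μ Q) * r^k := by ring
      _ = 4 * m * A * P * μ Q * (1-r)⁻¹ := by
          rw [ENNReal.tsum_mul_left, ENNReal.tsum_geometric]
      _ = 4 * m * (1-r)⁻¹ * (A * μ Q * P) := by ring
  rw [hLHS]
  calc (∑' R : Set X, (if R ∈ 𝒟 ∧ R ⊆ Q
          then (τ R : ℝ≥0∞) * μ R * ∏ i, (avg μ R (w i)) ^ β i else 0))
      ≤ ∑' R : Set X, ((if R ∈ 𝒟 ∧ R ⊆ Q then P * ((τ R : ℝ≥0∞) * μ R) else 0)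
        + ∑' k : ℕ, ∑ i, (if H k i R then 2^(k+1) * P * ((τ R : ℝ≥0∞) * μ R) else 0)) :=
        ENNReal.tsum_le_tsum key
    _ = (∑' R : Set X, (if R ∈ 𝒟 ∧ R ⊆ Q then P * ((τ R : ℝ≥0∞) * μ R) else 0))
        + ∑' R : Set X, ∑' k : ℕ, ∑ i,
            (if H k i R then 2^(k+1) * P * ((τ R : ℝ≥0∞) * μ R) else 0) :=
        ENNReal.tsum_add
    _ ≤ P * (A * μ Q) + 4 * m * (1-r)⁻¹ * (A * μ Q * P) := add_le_add hfirst hsecond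
    _ = (1 + 4 * m * (1-r)⁻¹) * A * μ Q * P := by ring
end

section
/- Let 1 < s < ∞. There exists a constant C_s > 0 such that for every dyadic grid 𝒟 on a measure space X, every positive locally finite measure σ on X, and any nonnegative numbers λ_Q for Q ∈ 𝒟, one has ∫ ( Σ_{Q ∈ 𝒟} (λ_Q / σ(Q)) · 1_Q(x) )^s dσ(x) ≤ C_s · Σ_{Q ∈ 𝒟} λ_Q · ( σ(Q)⁻¹ Σ_{Q' ∈ 𝒟, Q' ⊆ Q} λ_{Q'} )^{s−1}. -/
open MeasureTheory ENNReal
open scoped Classical NNReal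

open Filter

private lemma real_key {s : ℝ} (hs : 1 ≤ s) {y b : ℝ} (hy : 0 ≤ y) (hyb : y ≤ b) :
    b ^ s ≤ y ^ s + s * (b - y) * b ^ (s - 1) := by
  have hb : 0 ≤ b := hy.trans hyb
  rcases eq_or_lt_of_le hb with h0 | hbpos
  · have hy0 : y = 0 := le_antisymm (by linarith) hy
    subst hy0
    have hb0 : b = 0 := by linarith
    subst hb0
    simp [Real.zero_rpow (by positivity : s ≠ 0)]
  · -- Bernoulli with u = y/b - 1 ∈ [-1, 0]
    have hu : (-1 : ℝ) ≤ y / b - 1 := by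
      have : 0 ≤ y / b := div_nonneg hy hb
      linarith
    have key := one_add_mul_self_le_rpow_one_add hu hs
    have h1 : 1 + (y / b - 1) = y / b := by ring
    rw [h1] at key
    -- key : 1 + s * (y/b - 1) ≤ (y/b)^s
    have hdiv : (y / b) ^ s = y ^ s / b ^ s := Real.div_rpow hy hb s
    have hbs : (0:ℝ) < b ^ s := Real.rpow_pos_of_pos hbpos s
    have key2 : (1 + s * (y / b - 1)) * b ^ s ≤ y ^ s := by
      calc (1 + s * (y / b - 1)) * b ^ s ≤ (y / b) ^ s * b ^ s := by
            apply mul_le_mul_of_nonneg_right key hbs.le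
        _ = y ^ s := by rw [hdiv]; field_simp
    have hsplit : b ^ s = b * b ^ (s - 1) := by
      rw [← Real.rpow_one_add' hb (by linarith : 1 + (s-1) ≠ 0)]
      norm_num
    have hsplit2 : (y / b) * b ^ s = y * b ^ (s-1) := by
      rw [hsplit]; field_simp
    nlinarith [Real.rpow_nonneg hb (s-1), hbpos]

private lemma ennreal_key {s : ℝ} (hs : 1 ≤ s) (x t : ℝ≥0∞) :
    (x + t) ^ s ≤ x ^ s + ENNReal.ofReal s * t * (x + t) ^ (s - 1) := by
  have hs0 : (0:ℝ) < s := lt_of_lt_of_le zero_lt_one hs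
  rcases eq_or_ne t ⊤ with rfl | ht
  · have h1 : ENNReal.ofReal s ≠ 0 := by
      simp [ENNReal.ofReal_eq_zero]; linarith
    have h2 : ((x + ⊤) ^ (s - 1) : ℝ≥0∞) ≠ 0 := by
      rw [add_top]
      rcases lt_or_eq_of_le (sub_nonneg.mpr hs) with h | h
      · rw [ENNReal.top_rpow_of_pos h]; simp
      · rw [← h, ENNReal.rpow_zero]; simp
    have : ENNReal.ofReal s * ⊤ * (x + ⊤) ^ (s - 1) = ⊤ := by
      rw [ENNReal.mul_top h1, ENNReal.top_mul h2]
    rw [this]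
    simp
  rcases eq_or_ne x ⊤ with rfl | hx
  · rw [ENNReal.top_rpow_of_pos hs0]
    simp [ENNReal.top_rpow_of_pos hs0]
  · -- finite case
    have hxt : x + t ≠ ⊤ := by simp [hx, ht]
    set X := x.toReal with hX
    set T := t.toReal with hT
    have hX0 : 0 ≤ X := ENNReal.toReal_nonneg
    have hT0 : 0 ≤ T := ENNReal.toReal_nonneg
    have hxX : x = ENNReal.ofReal X := (ENNReal.ofReal_toReal hx).symm
    have htT : t = ENNReal.ofReal T := (ENNReal.ofReal_toReal ht).symm
    have hsum : x + t = ENNReal.ofReal (X + T) := by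
      rw [hxX, htT, ENNReal.ofReal_add hX0 hT0]
    rw [hsum, hxX, htT]
    rw [ENNReal.ofReal_rpow_of_nonneg (by linarith) hs0.le,
        ENNReal.ofReal_rpow_of_nonneg hX0 hs0.le,
        ENNReal.ofReal_rpow_of_nonneg (by linarith) (by linarith : (0:ℝ) ≤ s - 1),
        ← ENNReal.ofReal_mul (by linarith : (0:ℝ) ≤ s),
        ← ENNReal.ofReal_mul (by positivity),
        ← ENNReal.ofReal_add (by positivity) (by positivity)]
    apply ENNReal.ofReal_le_ofReal
    have := real_key hs hX0 (by linarith : X ≤ X + T)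
    simpa using this

private lemma exists_max {ι : Type*} (r : ι → ι → Prop) (htrans : Transitive r) :
    ∀ F : Finset ι, (∀ i ∈ F, ∀ j ∈ F, r i j ∨ r j i) → F.Nonempty →
      ∃ m ∈ F, ∀ j ∈ F, r j m := by
  classical
  intro F
  induction F using Finset.induction_on with
  | empty => intro _ h; simp at h
  | @insert a F ha IH =>
    intro htot _
    have haa : r a a := by
      rcases htot a (by simp) a (by simp) with h | h <;> exact h
    rcases F.eq_empty_or_nonempty with rfl | hFne
    · refine ⟨a, by simp, ?_⟩
      intro j hj
      simp only [Finset.mem_insert, Finset.notMem_empty, or_false] at hj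
      subst hj; exact haa
    · obtain ⟨m, hmF, hmax⟩ :=
        IH (fun i hi j hj => htot i (by simp [hi]) j (by simp [hj])) hFne
    
      rcases htot a (by simp) m (by simp [hmF]) with h | h
      · refine ⟨m, by simp [hmF], ?_⟩
        intro j hj
        rcases Finset.mem_insert.1 hj with rfl | hjF
        · exact h
        · exact hmax j hjF
      · refine ⟨a, by simp, ?_⟩
        intro j hj
        rcases Finset.mem_insert.1 hj with rfl | hjF
        · exact haa
        · exact htrans (hmax j hjF) h

private lemma telescope {ι : Type*} {s : ℝ} (hs : 1 ≤ s)
    (r : ι → ι → Prop) (htrans : Transitive r) :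
    ∀ F : Finset ι, ∀ t : ι → ℝ≥0∞,
      (∀ i ∈ F, ∀ j ∈ F, t i ≠ 0 → t j ≠ 0 → r i j ∨ r j i) →
      (∑ i ∈ F, t i) ^ s ≤
        ENNReal.ofReal s *
          ∑ i ∈ F, t i * (∑ j ∈ F.filter (fun j => r j i), t j) ^ (s - 1) := by
  classical
  have hs0 : (0:ℝ) < s := lt_of_lt_of_le zero_lt_one hs
  intro F
  induction F using Finset.strongInduction with
  | _ F IH =>
    intro t htot
    rcases F.eq_empty_or_nonempty with rfl | hFne
    · simp [ENNReal.zero_rpow_of_pos hs0]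
    by_cases hzero : ∃ i ∈ F, t i = 0
    · obtain ⟨i, hiF, hti⟩ := hzero
      have hsub : F.erase i ⊂ F := Finset.erase_ssubset hiF
      have hsum_eq : ∑ j ∈ F, t j = ∑ j ∈ F.erase i, t j := by
        rw [← Finset.add_sum_erase F t hiF, hti, zero_add]
      have hfilter_eq : ∀ k, ∑ j ∈ F.filter (fun j => r j k), t j
          = ∑ j ∈ (F.erase i).filter (fun j => r j k), t j := by
        intro k
        refine (Finset.sum_subset (Finset.filter_subset_filter _ (Finset.erase_subset i F)) ?_).symm
        intro j hj hj'
        have : j = i := by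
          by_contra hne
          exact hj' (Finset.mem_filter.2 ⟨Finset.mem_erase.2
            ⟨hne, (Finset.mem_filter.1 hj).1⟩, (Finset.mem_filter.1 hj).2⟩)
        subst this; exact hti
      have hrhs_eq : ∑ k ∈ F, t k * (∑ j ∈ F.filter (fun j => r j k), t j) ^ (s-1)
          = ∑ k ∈ F.erase i, t k * (∑ j ∈ (F.erase i).filter (fun j => r j k), t j) ^ (s-1) := by
        rw [← Finset.add_sum_erase F _ hiF, hti, zero_mul, zero_add]
        exact Finset.sum_congr rfl fun k _ => by rw [hfilter_eq k]
      rw [hsum_eq, hrhs_eq]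
      exact IH _ hsub t (fun i hi j hj => htot i (Finset.mem_of_mem_erase hi)
        j (Finset.mem_of_mem_erase hj))
    · push_neg at hzero
      obtain ⟨m, hmF, hmax⟩ := exists_max r htrans F
        (fun i hi j hj => htot i hi j hj (hzero i hi) (hzero j hj)) hFne
      set F' := F.erase m with hF'
      have hsum : ∑ j ∈ F, t j = (∑ j ∈ F', t j) + t m := by
        rw [← Finset.add_sum_erase F t hmF]; ring
      have key := ennreal_key hs (∑ j ∈ F', t j) (t m)
      -- bound the two pieces
      have hIH : (∑ j ∈ F', t j) ^ s ≤
          ENNReal.ofReal s * ∑ k ∈ F', t k * (∑ j ∈ F.filter (fun j => r j k), t j) ^ (s-1) := by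
        refine le_trans (IH F' (Finset.erase_ssubset hmF) t
          (fun i hi j hj => htot i (Finset.mem_of_mem_erase hi) j (Finset.mem_of_mem_erase hj))) ?_
        refine mul_le_mul_right (Finset.sum_le_sum fun k _ => ?_) _
        refine mul_le_mul_right (ENNReal.rpow_le_rpow ?_ (by linarith)) _
        exact Finset.sum_le_sum_of_subset
          (Finset.filter_subset_filter _ (Finset.erase_subset m F))
      have hfull : F.filter (fun j => r j m) = F :=
        Finset.filter_true_of_mem fun j hj => hmax j hj
      calc (∑ j ∈ F, t j) ^ s
          = ((∑ j ∈ F', t j) + t m) ^ s := by rw [hsum]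
        _ ≤ (∑ j ∈ F', t j) ^ s +
              ENNReal.ofReal s * t m * ((∑ j ∈ F', t j) + t m) ^ (s-1) := key
        _ ≤ ENNReal.ofReal s * ∑ k ∈ F', t k * (∑ j ∈ F.filter (fun j => r j k), t j) ^ (s-1)
              + ENNReal.ofReal s * (t m * (∑ j ∈ F.filter (fun j => r j m), t j) ^ (s-1)) := by
            refine add_le_add hIH ?_
            rw [hfull, ← hsum, mul_assoc]
        _ = ENNReal.ofReal s * ∑ k ∈ F, t k * (∑ j ∈ F.filter (fun j => r j k), t j) ^ (s-1) := by
            rw [← mul_add, ← Finset.add_sum_erase F _ hmF]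
            ring


private lemma tsum_subtype_eq_iSup' {ι : Type*} (t : ι → ℝ≥0∞) (D S : Set ι) (hSD : S ⊆ D)
    (hsupp : ∀ i ∈ D, t i ≠ 0 → i ∈ S) (F : ℕ → Finset ι) (hmono : Monotone F)
    (hFS : ∀ n, ↑(F n) ⊆ S) (hcov : ∀ i ∈ S, ∃ n, i ∈ F n) :
    ∑' (i : D), t i = ⨆ n, ∑ i ∈ F n, t i := by
  classical
  rw [tsum_subtype D t]
  apply le_antisymm
  · rw [ENNReal.tsum_eq_iSup_sum]
    refine iSup_le fun G => ?_
    set G' := G.filter (fun i => D.indicator t i ≠ 0) with hG'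
    have hsum : ∑ i ∈ G, D.indicator t i = ∑ i ∈ G', D.indicator t i :=
      (Finset.sum_filter_ne_zero G).symm
    have hG'S : ∀ i ∈ G', i ∈ S := by
      intro i hi
      have h2 := (Finset.mem_filter.1 hi).2
      have hiD : i ∈ D := by
        by_contra hiD
        exact h2 (Set.indicator_of_notMem hiD t)
      exact hsupp i hiD (by rwa [Set.indicator_of_mem hiD] at h2)
    choose nf hnf using fun (i : ι) (hi : i ∈ S) => hcov i hi
    have hbound : ∃ N, ∀ i ∈ G', i ∈ F N := by
      refine ⟨G'.sup (fun i => if h : i ∈ S then nf i h else 0), fun i hi => ?_⟩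
      have hiS := hG'S i hi
      have : nf i hiS ≤ G'.sup (fun i => if h : i ∈ S then nf i h else 0) := by
        refine le_trans (le_of_eq ?_) (Finset.le_sup hi)
        simp [hiS]
      exact hmono this (hnf i hiS)
    obtain ⟨N, hN⟩ := hbound
    rw [hsum]
    calc ∑ i ∈ G', D.indicator t i = ∑ i ∈ G', t i := by
          refine Finset.sum_congr rfl fun i hi => Set.indicator_of_mem (hSD (hG'S i hi)) t
      _ ≤ ∑ i ∈ F N, t i := Finset.sum_le_sum_of_subset (fun i hi => hN i hi)
      _ ≤ ⨆ n, ∑ i ∈ F n, t i := le_iSup (fun n => ∑ i ∈ F n, t i) N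
  · refine iSup_le fun n => ?_
    calc ∑ i ∈ F n, t i = ∑ i ∈ F n, D.indicator t i := by
          refine Finset.sum_congr rfl fun i hi =>
            (Set.indicator_of_mem (hSD (hFS n hi)) t).symm
      _ ≤ ∑' i, D.indicator t i := ENNReal.sum_le_tsum _


private lemma iSup_rpow' {u : ℕ → ℝ≥0∞} (hu : Monotone u) {s : ℝ} (hs : 0 < s) :
    (⨆ n, u n) ^ s = ⨆ n, (u n) ^ s := by
  have h1 : Tendsto u atTop (nhds (⨆ n, u n)) := tendsto_atTop_iSup hu
  have h2 : Tendsto (fun n => u n ^ s) atTop (nhds ((⨆ n, u n) ^ s)) :=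
    (ENNReal.continuous_rpow_const.tendsto _).comp h1
  have h3 : Tendsto (fun n => u n ^ s) atTop (nhds (⨆ n, u n ^ s)) :=
    tendsto_atTop_iSup (fun a b hab => ENNReal.rpow_le_rpow (hu hab) hs.le)
  exact tendsto_nhds_unique h2 h3


private lemma branch1 {X : Type} [MeasurableSpace X] (σ : Measure X) (𝒟 : Set (Set X))
    (hmeas : ∀ Q ∈ 𝒟, MeasurableSet Q)
    (hdyad : ∀ Q ∈ 𝒟, ∀ Q' ∈ 𝒟, Q ⊆ Q' ∨ Q' ⊆ Q ∨ Disjoint Q Q')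
    (lam : Set X → ℝ≥0∞) {s : ℝ} (hs : 1 < s) (hs2 : s < 2)
    (F : Finset (Set X)) (hF𝒟 : ∀ Q ∈ F, Q ∈ 𝒟) :
    ∫⁻ x, (∑ Q ∈ F, Set.indicator Q (fun _ => lam Q / σ Q) x) ^ s ∂σ
      ≤ ENNReal.ofReal s *
        ∑ Q ∈ F, lam Q * ((∑ Q' ∈ F.filter (fun R => R ⊆ Q), lam Q') / σ Q) ^ (s-1) := by
  classical
  have hs1 : (1:ℝ) ≤ s := hs.le
  set p : ℝ := s - 1 with hp
  have hppos : (0:ℝ) < p := by rw [hp]; linarith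
  have hplt1 : p < 1 := by rw [hp]; linarith
  have hp0 : p ≠ 0 := ne_of_gt hppos
  set a : Set X → ℝ≥0∞ := fun Q => lam Q / σ Q with ha
  set A : Set X → ℝ≥0∞ := fun Q => ∑ Q' ∈ F.filter (fun R => R ⊆ Q), lam Q' with hA
  have haσ : ∀ Q, a Q * σ Q ≤ lam Q := fun Q => by
    rw [ha]; simpa [mul_comm] using ENNReal.mul_div_le (a := σ Q) (b := lam Q)
  set g : Set X → X → ℝ≥0∞ :=
    fun Q x => ∑ Q' ∈ F.filter (fun R => R ⊆ Q), Set.indicator Q' (fun _ => a Q') x with hg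
  set r : Set X → Set X → Prop := fun Q Q' => Q ⊆ Q' with hr
  have hrtrans : Transitive r := fun _ _ _ h1 h2 => h1.trans h2
  have hmeas' : ∀ Q ∈ F, MeasurableSet Q := fun Q hQ => hmeas Q (hF𝒟 Q hQ)
  have hgmeas : ∀ Q ∈ F, Measurable (g Q) := by
    intro Q hQ
    refine Finset.measurable_sum _ fun Q' hQ' => ?_
    exact measurable_const.indicator (hmeas' Q' (Finset.mem_filter.1 hQ').1)
  -- pointwise step
  have hpt : ∀ x, (∑ Q ∈ F, Set.indicator Q (fun _ => a Q) x) ^ s ≤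
      ENNReal.ofReal s * ∑ Q ∈ F, Set.indicator Q (fun _ => a Q) x * (g Q x) ^ p := by
    intro x
    have htot : ∀ i ∈ F, ∀ j ∈ F, Set.indicator i (fun _ => a i) x ≠ 0 →
        Set.indicator j (fun _ => a j) x ≠ 0 → r i j ∨ r j i := by
      intro i hi j hj hti htj
      have hxi : x ∈ i := by by_contra hx; exact hti (Set.indicator_of_notMem hx _)
      have hxj : x ∈ j := by by_contra hx; exact htj (Set.indicator_of_notMem hx _)
      rcases hdyad i (hF𝒟 i hi) j (hF𝒟 j hj) with hc | hc | hc
      · exact Or.inl hc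
      · exact Or.inr hc
      · exact absurd hc (Set.not_disjoint_iff.2 ⟨x, hxi, hxj⟩)
    refine le_trans (telescope hs1 r hrtrans F _ htot) ?_
    refine mul_le_mul_right (Finset.sum_le_sum fun Q hQ => ?_) _
    refine mul_le_mul_right (le_of_eq ?_) _
    congr 1
  -- integrate
  have hint : ∫⁻ x, (∑ Q ∈ F, Set.indicator Q (fun _ => a Q) x) ^ s ∂σ ≤
      ENNReal.ofReal s * ∑ Q ∈ F, ∫⁻ x, Set.indicator Q (fun _ => a Q) x * (g Q x) ^ p ∂σ := by
    refine le_trans (lintegral_mono hpt) ?_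
    rw [lintegral_const_mul _ (by
      refine Finset.measurable_sum _ fun Q hQ => ?_
      exact ((measurable_const.indicator (hmeas' Q hQ))).mul
        (((hgmeas Q hQ)).pow measurable_const))]
    refine mul_le_mul_right (le_of_eq ?_) _
    exact lintegral_finset_sum _ fun Q hQ =>
      ((measurable_const.indicator (hmeas' Q hQ))).mul (((hgmeas Q hQ)).pow measurable_const)
  -- per-cube estimate
  have hperQ : ∀ Q ∈ F, ∫⁻ x, Set.indicator Q (fun _ => a Q) x * (g Q x) ^ p ∂σ ≤
      lam Q * (A Q / σ Q) ^ p := by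
    intro Q hQ
    set oneQ : X → ℝ≥0∞ := Q.indicator (fun _ => (1:ℝ≥0∞)) with honeQ
    have hone_meas : Measurable oneQ := measurable_const.indicator (hmeas' Q hQ)
    have hsplit : ∀ x, Set.indicator Q (fun _ => a Q) x * (g Q x) ^ p
        = a Q * (oneQ x * (g Q x) ^ p) := by
      intro x
      by_cases hx : x ∈ Q <;>
        simp [honeQ, Set.indicator_of_mem, Set.indicator_of_notMem, hx, mul_assoc]
    have hconst : ∫⁻ x, Set.indicator Q (fun _ => a Q) x * (g Q x) ^ p ∂σ
        = a Q * ∫⁻ x, oneQ x * (g Q x) ^ p ∂σ := by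
      simp_rw [hsplit]
      exact lintegral_const_mul _ (hone_meas.mul ((hgmeas Q hQ).pow measurable_const))
    -- Hölder (Jensen) on the inner integral
    have hPQ : Real.HolderConjugate (1/p) (1/(1-p)) := by
      constructor
      · rw [one_div, one_div, inv_inv, inv_inv, inv_one]; ring
      · exact one_div_pos.2 hppos
      · exact one_div_pos.2 (by linarith)
    have hf1 : ∀ x, oneQ x * (g Q x) ^ p = ((fun y => (oneQ y * g Q y) ^ p) * oneQ) x := by
      intro x
      by_cases hx : x ∈ Q <;>
        simp [honeQ, Set.indicator_of_mem, Set.indicator_of_notMem, hx,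
          ENNReal.zero_rpow_of_pos hppos]
    have hjensen : ∫⁻ x, oneQ x * (g Q x) ^ p ∂σ
        ≤ (∫⁻ x, oneQ x * g Q x ∂σ) ^ p * (σ Q) ^ (1-p) := by
      have hH := ENNReal.lintegral_mul_le_Lp_mul_Lq σ hPQ
        (f := fun y => (oneQ y * g Q y) ^ p) (g := oneQ)
        ((hone_meas.mul (hgmeas Q hQ)).pow measurable_const).aemeasurable
        hone_meas.aemeasurable
      have e1 : ∀ y, ((oneQ y * g Q y) ^ p) ^ (1/p) = oneQ y * g Q y := by
        intro y
        rw [← ENNReal.rpow_mul, mul_one_div, div_self hp0, ENNReal.rpow_one]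
      have h1p : (0:ℝ) < 1 - p := by linarith
      have e2 : ∀ y, (oneQ y) ^ (1/(1-p)) = oneQ y := by
        intro y
        by_cases hx : y ∈ Q
        · rw [honeQ, Set.indicator_of_mem hx, ENNReal.one_rpow]
        · rw [honeQ, Set.indicator_of_notMem hx,
            ENNReal.zero_rpow_of_pos (one_div_pos.2 h1p)]
      simp_rw [e1, e2] at hH
      have e3 : ∫⁻ y, oneQ y ∂σ = σ Q := by
        rw [honeQ, lintegral_indicator_const (hmeas' Q hQ), one_mul]
      rw [e3] at hH
      have e4 : 1/(1/p) = p := one_div_one_div p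
      have e5 : 1/(1/(1-p)) = 1-p := one_div_one_div (1-p)
      rw [e4, e5] at hH
      calc ∫⁻ x, oneQ x * (g Q x) ^ p ∂σ
          = ∫⁻ x, ((fun y => (oneQ y * g Q y) ^ p) * oneQ) x ∂σ := by simp_rw [hf1]
        _ ≤ (∫⁻ x, oneQ x * g Q x ∂σ) ^ p * (σ Q) ^ (1-p) := hH
    have hinner : ∫⁻ x, oneQ x * g Q x ∂σ ≤ A Q := by
      have heq : ∀ x, oneQ x * g Q x
          = ∑ Q' ∈ F.filter (fun R => R ⊆ Q), Set.indicator Q' (fun _ => a Q') x := by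
        intro x
        rw [hg, Finset.mul_sum]
        refine Finset.sum_congr rfl fun Q' hQ' => ?_
        have hQ'Q : Q' ⊆ Q := (Finset.mem_filter.1 hQ').2
        by_cases hx : x ∈ Q'
        · rw [Set.indicator_of_mem hx, honeQ, Set.indicator_of_mem (hQ'Q hx), one_mul]
        · rw [Set.indicator_of_notMem hx, mul_zero]
      simp_rw [heq]
      rw [lintegral_finset_sum _ (fun Q' hQ' =>
        measurable_const.indicator (hmeas' Q' (Finset.mem_filter.1 hQ').1))]
      rw [hA]
      refine Finset.sum_le_sum fun Q' hQ' => ?_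
      rw [lintegral_indicator_const (hmeas' Q' (Finset.mem_filter.1 hQ').1)]
      exact haσ Q'
    -- algebra
    rcases eq_or_ne (σ Q) ⊤ with hσtop | hσtop
    · have : a Q = 0 := by show lam Q / σ Q = 0; simp [hσtop]
      rw [hconst, this, zero_mul]
      exact zero_le
    rcases eq_or_ne (σ Q) 0 with hσ0' | hσ0'
    · -- σ Q = 0 : RHS is ⊤ unless lam Q = 0
      rcases eq_or_ne (lam Q) 0 with hl0 | hl0
      · have : a Q = 0 := by show lam Q / σ Q = 0; simp [hl0]
        rw [hconst, this, zero_mul]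
        exact zero_le
      · have hAne : A Q ≠ 0 := by
          rw [hA]
          intro hcon
          apply hl0
          have := Finset.sum_eq_zero_iff.1 hcon Q
            (Finset.mem_filter.2 ⟨hQ, subset_rfl⟩)
          exact this
        have : (A Q / σ Q) ^ p = ⊤ := by
          rw [hσ0', ENNReal.div_zero hAne, ENNReal.top_rpow_of_pos hppos]
        rw [this, ENNReal.mul_top hl0]
        exact le_top
    · -- 0 < σ Q < ⊤
      have hstep : ∫⁻ x, Set.indicator Q (fun _ => a Q) x * (g Q x) ^ p ∂σ
          ≤ a Q * ((A Q) ^ p * (σ Q) ^ (1-p)) := by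
        rw [hconst]
        refine mul_le_mul_right ?_ _
        refine le_trans hjensen ?_
        exact mul_le_mul_left (ENNReal.rpow_le_rpow hinner hppos.le) _
      refine le_trans hstep (le_of_eq ?_)
      show lam Q / σ Q * (A Q ^ p * σ Q ^ (1-p)) = lam Q * (A Q / σ Q) ^ p
      rw [ENNReal.div_rpow_of_nonneg _ _ hppos.le, div_eq_mul_inv, div_eq_mul_inv,
        ← ENNReal.rpow_neg_one (σ Q), ← ENNReal.rpow_neg]
      calc lam Q * (σ Q) ^ (-1:ℝ) * ((A Q) ^ p * (σ Q) ^ (1-p))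
          = lam Q * (A Q) ^ p * ((σ Q) ^ (-1:ℝ) * (σ Q) ^ (1-p)) := by ring
        _ = lam Q * (A Q) ^ p * (σ Q) ^ (-p) := by
            rw [← ENNReal.rpow_add _ _ hσ0' hσtop]
            congr 1
            ring
        _ = lam Q * ((A Q) ^ p * (σ Q) ^ (-p)) := by ring
  calc ∫⁻ x, (∑ Q ∈ F, Set.indicator Q (fun _ => a Q) x) ^ s ∂σ
      ≤ ENNReal.ofReal s * ∑ Q ∈ F, ∫⁻ x, Set.indicator Q (fun _ => a Q) x * (g Q x) ^ p ∂σ :=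
        hint
    _ ≤ ENNReal.ofReal s * ∑ Q ∈ F, lam Q * (A Q / σ Q) ^ p :=
        mul_le_mul_right (Finset.sum_le_sum hperQ) _


private lemma branch2 {X : Type} [MeasurableSpace X] (σ : Measure X) (𝒟 : Set (Set X))
    (hmeas : ∀ Q ∈ 𝒟, MeasurableSet Q)
    (hdyad : ∀ Q ∈ 𝒟, ∀ Q' ∈ 𝒟, Q ⊆ Q' ∨ Q' ⊆ Q ∨ Disjoint Q Q')
    (lam : Set X → ℝ≥0∞) {s : ℝ} (hs : 2 ≤ s)
    (F : Finset (Set X)) (hF𝒟 : ∀ Q ∈ F, Q ∈ 𝒟)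
    (hltop : ∀ Q ∈ F, lam Q ≠ ⊤) (hσ0 : ∀ Q ∈ F, σ Q ≠ 0) :
    ∫⁻ x, (∑ Q ∈ F, Set.indicator Q (fun _ => lam Q / σ Q) x) ^ s ∂σ
      ≤ ENNReal.ofReal s * (ENNReal.ofReal (s-1)) ^ (s-1) *
        ∑ Q ∈ F, lam Q * ((∑ Q' ∈ F.filter (fun R => R ⊆ Q), lam Q') / σ Q) ^ (s-1) := by
  classical
  have hs1 : (1:ℝ) ≤ s := by linarith
  set a : Set X → ℝ≥0∞ := fun Q => lam Q / σ Q with ha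
  set h : Set X → ℝ≥0∞ := fun Q => ∑ Q' ∈ F.filter (fun R => Q ⊆ R), a Q' with hh
  set A : Set X → ℝ≥0∞ := fun Q => ∑ Q' ∈ F.filter (fun R => R ⊆ Q), lam Q' with hA
  set ρ : Set X → ℝ≥0∞ := fun Q => A Q / σ Q with hρ
  set D : ℝ≥0∞ := ∑ Q ∈ F, lam Q * (h Q) ^ (s-1) with hD
  set R : ℝ≥0∞ := ∑ Q ∈ F, lam Q * (ρ Q) ^ (s-1) with hR
  have haσ : ∀ Q, a Q * σ Q ≤ lam Q := fun Q => by
    rw [ha]; simpa [mul_comm] using ENNReal.mul_div_le (a := σ Q) (b := lam Q)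
  -- superset relation
  set r : Set X → Set X → Prop := fun Q Q' => Q' ⊆ Q with hr
  have hrtrans : Transitive r := fun _ _ _ h1 h2 => h2.trans h1
  -- Step A : pointwise estimate
  have hpt : ∀ x, (∑ Q ∈ F, Set.indicator Q (fun _ => a Q) x) ^ s ≤
      ENNReal.ofReal s * ∑ Q ∈ F, Set.indicator Q (fun _ => a Q) x * (h Q) ^ (s-1) := by
    intro x
    have htot : ∀ i ∈ F, ∀ j ∈ F, Set.indicator i (fun _ => a i) x ≠ 0 →
        Set.indicator j (fun _ => a j) x ≠ 0 → r i j ∨ r j i := by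
      intro i hi j hj hti htj
      have hxi : x ∈ i := by by_contra hx; exact hti (Set.indicator_of_notMem hx _)
      have hxj : x ∈ j := by by_contra hx; exact htj (Set.indicator_of_notMem hx _)
      rcases hdyad i (hF𝒟 i hi) j (hF𝒟 j hj) with hc | hc | hc
      · exact Or.inr hc
      · exact Or.inl hc
      · exact absurd hc (Set.not_disjoint_iff.2 ⟨x, hxi, hxj⟩)
    refine le_trans (telescope hs1 r hrtrans F _ htot) ?_
    refine mul_le_mul_right (Finset.sum_le_sum fun Q hQ => ?_) _
    refine mul_le_mul_right (ENNReal.rpow_le_rpow ?_ (by linarith)) _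
    rw [hh]
    exact Finset.sum_le_sum fun Q' _ => Set.indicator_apply_le (fun _ => le_rfl)
  -- Step A : integrate
  have hstepA : ∫⁻ x, (∑ Q ∈ F, Set.indicator Q (fun _ => a Q) x) ^ s ∂σ
      ≤ ENNReal.ofReal s * D := by
    refine le_trans (lintegral_mono hpt) ?_
    rw [lintegral_const_mul _ (by
      refine Finset.measurable_sum _ fun Q hQ => ?_
      exact (measurable_const.indicator (hmeas Q (hF𝒟 Q hQ))).mul_const _)]
    refine mul_le_mul_right ?_ _
    rw [lintegral_finset_sum _ (fun Q hQ =>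
      (measurable_const.indicator (hmeas Q (hF𝒟 Q hQ))).mul_const _)]
    refine Finset.sum_le_sum fun Q hQ => ?_
    have heq : (fun x => Set.indicator Q (fun _ => a Q) x * (h Q) ^ (s-1))
        = Set.indicator Q (fun _ => a Q * (h Q) ^ (s-1)) := by
      funext x
      by_cases hx : x ∈ Q <;> simp [Set.indicator_of_mem, Set.indicator_of_notMem, hx]
    rw [heq, lintegral_indicator_const (hmeas Q (hF𝒟 Q hQ))]
    calc a Q * (h Q) ^ (s-1) * σ Q = (a Q * σ Q) * (h Q) ^ (s-1) := by ring
      _ ≤ lam Q * (h Q) ^ (s-1) := mul_le_mul_left (haσ Q) _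
  -- Step B : telescoping inside D
  have hstepB : D ≤ ENNReal.ofReal (s-1) *
      ∑ Q ∈ F, lam Q * ρ Q * (h Q) ^ (s-2) := by
    have hB1 : ∀ Q ∈ F, (h Q) ^ (s-1) ≤ ENNReal.ofReal (s-1) *
        ∑ Q' ∈ F.filter (fun R => Q ⊆ R), a Q' * (h Q') ^ (s-2) := by
      intro Q hQ
      have hQne : Q.Nonempty := by
        rw [Set.nonempty_iff_ne_empty]
        intro hemp; exact hσ0 Q hQ (by rw [hemp]; exact measure_empty)
      obtain ⟨x0, hx0⟩ := hQne
      have htot : ∀ i ∈ F.filter (fun R => Q ⊆ R), ∀ j ∈ F.filter (fun R => Q ⊆ R),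
          a i ≠ 0 → a j ≠ 0 → r i j ∨ r j i := by
        intro i hi j hj _ _
        obtain ⟨hiF, hiQ⟩ := Finset.mem_filter.1 hi
        obtain ⟨hjF, hjQ⟩ := Finset.mem_filter.1 hj
        rcases hdyad i (hF𝒟 i hiF) j (hF𝒟 j hjF) with hc | hc | hc
        · exact Or.inr hc
        · exact Or.inl hc
        · exact absurd hc (Set.not_disjoint_iff.2 ⟨x0, hiQ hx0, hjQ hx0⟩)
      have htel := telescope (by linarith : (1:ℝ) ≤ s - 1) r hrtrans
        (F.filter (fun R => Q ⊆ R)) a htot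
      have hexp : s - 1 - 1 = s - 2 := by ring
      rw [hexp] at htel
      refine le_trans htel ?_
      refine mul_le_mul_right (Finset.sum_le_sum fun Q' hQ' => ?_) _
      refine mul_le_mul_right (ENNReal.rpow_le_rpow ?_ (by linarith)) _
      refine Finset.sum_le_sum_of_subset ?_
      intro j hj
      obtain ⟨hj1, hj2⟩ := Finset.mem_filter.1 hj
      exact Finset.mem_filter.2 ⟨(Finset.mem_filter.1 hj1).1, hj2⟩
    calc D ≤ ∑ Q ∈ F, lam Q * (ENNReal.ofReal (s-1) *
          ∑ Q' ∈ F.filter (fun R => Q ⊆ R), a Q' * (h Q') ^ (s-2)) := by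
          rw [hD]; exact Finset.sum_le_sum fun Q hQ => mul_le_mul_right (hB1 Q hQ) _
      _ = ENNReal.ofReal (s-1) * ∑ Q ∈ F, lam Q *
          ∑ Q' ∈ F.filter (fun R => Q ⊆ R), a Q' * (h Q') ^ (s-2) := by
          rw [Finset.mul_sum]; exact Finset.sum_congr rfl fun Q _ => by ring
      _ = ENNReal.ofReal (s-1) * ∑ Q ∈ F, lam Q * ρ Q * (h Q) ^ (s-2) := by
          congr 1
          -- swap the double sum
          have : ∀ Q ∈ F, lam Q * ∑ Q' ∈ F.filter (fun R => Q ⊆ R), a Q' * (h Q') ^ (s-2)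
              = ∑ Q' ∈ F, (if Q ⊆ Q' then lam Q * (a Q' * (h Q') ^ (s-2)) else 0) := by
            intro Q _
            rw [Finset.mul_sum, Finset.sum_filter]
          rw [Finset.sum_congr rfl this, Finset.sum_comm]
          refine Finset.sum_congr rfl fun Q' hQ' => ?_
          have h2 : ∑ Q ∈ F, (if Q ⊆ Q' then lam Q * (a Q' * (h Q') ^ (s-2)) else 0)
              = A Q' * (a Q' * (h Q') ^ (s-2)) := by
            show _ = (∑ Q ∈ F.filter (fun R => R ⊆ Q'), lam Q) * (a Q' * (h Q') ^ (s-2))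
            rw [Finset.sum_mul, Finset.sum_filter]
          rw [h2]
          show A Q' * (lam Q' / σ Q' * (h Q') ^ (s-2)) = lam Q' * (A Q' / σ Q') * (h Q') ^ (s-2)
          rw [div_eq_mul_inv, div_eq_mul_inv]
          ring
  -- Step C+D : Hölder and absorption
  have hDfin : D ≠ ⊤ := by
    rw [hD, ← lt_top_iff_ne_top, ENNReal.sum_lt_top]
    intro Q hQ
    have hhfin : h Q ≠ ⊤ := by
      rw [hh, ← lt_top_iff_ne_top, ENNReal.sum_lt_top]
      intro Q' hQ'
      exact ENNReal.div_lt_top (hltop Q' (Finset.mem_filter.1 hQ').1)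
        (hσ0 Q' (Finset.mem_filter.1 hQ').1)
    exact ENNReal.mul_lt_top (lt_top_iff_ne_top.2 (hltop Q hQ))
      (ENNReal.rpow_lt_top_of_nonneg (by linarith) hhfin)
  have hkey : D ≤ (ENNReal.ofReal (s-1)) ^ (s-1) * R := by
    rcases eq_or_lt_of_le hs with hs2 | hs2
    · -- s = 2
      have heq : ∀ Q ∈ F, lam Q * ρ Q * (h Q) ^ (s-2) = lam Q * (ρ Q) ^ (s-1) := by
        intro Q _
        rw [← hs2, show (2:ℝ) - 2 = 0 by norm_num, show (2:ℝ) - 1 = 1 by norm_num,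
          ENNReal.rpow_zero, ENNReal.rpow_one, mul_one]
      refine le_trans hstepB ?_
      rw [Finset.sum_congr rfl heq, ← hR]
      have h1 : ENNReal.ofReal (s-1) = 1 := by rw [← hs2]; norm_num
      rw [h1, one_mul, ENNReal.one_rpow, one_mul]
    · -- s > 2 : Hölder over counting measure
      set p : ℝ := s - 1 with hp
      set q : ℝ := p / (p - 1) with hq
      have hp1 : 1 < p := by rw [hp]; linarith
      have hppos : (0:ℝ) < p := by linarith
      have hp0 : p ≠ 0 := ne_of_gt hppos
      have hpq : Real.HolderConjugate p q := Real.HolderConjugate.conjExponent hp1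
      have hqpos : (0:ℝ) < q := hpq.symm.pos
      have hq0 : q ≠ 0 := ne_of_gt hqpos
      letI : MeasurableSpace (Set X) := ⊤
      haveI : MeasurableSingletonClass (Set X) := ⟨fun _ => trivial⟩
      set u : Set X → ℝ≥0∞ := fun T => if T ∈ F then (lam T) ^ (1/p) * ρ T else 0 with hu
      set v : Set X → ℝ≥0∞ := fun T => if T ∈ F then (lam T) ^ (1/q) * (h T) ^ (s-2) else 0 with hv
      have hlamsplit : ∀ T, (lam T) ^ (1/p) * (lam T) ^ (1/q) = lam T := by
        intro T
        rw [← ENNReal.rpow_add_of_nonneg _ _ (by positivity) (by positivity)]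
        rw [one_div, one_div, hpq.inv_add_inv_eq_one, ENNReal.rpow_one]
      have hEsum : ∑ Q ∈ F, lam Q * ρ Q * (h Q) ^ (s-2) = ∑' T, (u * v) T := by
        rw [tsum_eq_sum (s := F) (fun T hT => by simp [hu, hv, Pi.mul_apply, hT])]
        refine Finset.sum_congr rfl fun T hT => ?_
        simp only [Pi.mul_apply, hu, hv, if_pos hT]
        rw [show (lam T) ^ (1/p) * ρ T * ((lam T) ^ (1/q) * (h T) ^ (s-2))
            = ((lam T) ^ (1/p) * (lam T) ^ (1/q)) * ρ T * (h T) ^ (s-2) by ring,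
          hlamsplit]
      have husum : ∑' T, u T ^ p = R := by
        rw [tsum_eq_sum (s := F) (fun T hT => by
          simp [hu, hT, ENNReal.zero_rpow_of_pos hppos])]
        rw [hR]
        refine Finset.sum_congr rfl fun T hT => ?_
        simp only [hu, if_pos hT]
        rw [ENNReal.mul_rpow_of_nonneg _ _ hppos.le, ← ENNReal.rpow_mul,
          one_div, inv_mul_cancel₀ hp0, ENNReal.rpow_one]
      have hvsum : ∑' T, v T ^ q = D := by
        rw [tsum_eq_sum (s := F) (fun T hT => by
          simp [hv, hT, ENNReal.zero_rpow_of_pos hqpos])]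
        rw [hD]
        refine Finset.sum_congr rfl fun T hT => ?_
        simp only [hv, if_pos hT]
        have hexpq : (s - 2) * q = p := by
          have h2 : p - 1 ≠ 0 := ne_of_gt hpq.sub_one_pos
          have h3 : s - 2 = p - 1 := by rw [hp]; ring
          rw [hq, h3, mul_comm, div_mul_cancel₀ _ h2]
        rw [ENNReal.mul_rpow_of_nonneg _ _ hqpos.le, ← ENNReal.rpow_mul,
          ← ENNReal.rpow_mul, one_div, inv_mul_cancel₀ hq0, ENNReal.rpow_one, hexpq]
      have hholder : ∑' T, (u * v) T ≤ R ^ (1/p) * D ^ (1/q) := by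
        rw [← husum, ← hvsum, ← lintegral_count (u * v), ← lintegral_count (fun T => u T ^ p),
          ← lintegral_count (fun T => v T ^ q)]
        exact ENNReal.lintegral_mul_le_Lp_mul_Lq _ hpq
          measurable_from_top.aemeasurable measurable_from_top.aemeasurable
      have hDE : D ≤ ENNReal.ofReal (s-1) * (R ^ (1/p) * D ^ (1/q)) := by
        refine le_trans hstepB (mul_le_mul_right ?_ _)
        rw [hEsum]; exact hholder
      -- absorb D
      rcases eq_or_ne D 0 with hD0 | hD0
      · rw [hD0]; exact zero_le
      have hq1 : (1/q) * p = p - 1 := by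
        have h2 : q⁻¹ = 1 - p⁻¹ := by
          have := hpq.inv_add_inv_eq_one; linarith
        rw [one_div, h2, sub_mul, one_mul, inv_mul_cancel₀ hp0]
      have hR1 : (R ^ (1/p)) ^ p = R := by
        rw [← ENNReal.rpow_mul, one_div, inv_mul_cancel₀ hp0, ENNReal.rpow_one]
      have hD1 : (D ^ (1/q)) ^ p = D ^ (p-1) := by
        rw [← ENNReal.rpow_mul, hq1]
      have hraise : D ^ p ≤ (ENNReal.ofReal (s-1)) ^ p * R * D ^ (p-1) := by
        calc D ^ p ≤ (ENNReal.ofReal (s-1) * (R ^ (1/p) * D ^ (1/q))) ^ p :=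
              ENNReal.rpow_le_rpow hDE hppos.le
          _ = (ENNReal.ofReal (s-1)) ^ p * ((R ^ (1/p)) ^ p * (D ^ (1/q)) ^ p) := by
              rw [ENNReal.mul_rpow_of_nonneg _ _ hppos.le,
                ENNReal.mul_rpow_of_nonneg _ _ hppos.le]
          _ = (ENNReal.ofReal (s-1)) ^ p * R * D ^ (p-1) := by
              rw [hR1, hD1]; ring
      have hDp : D ^ p = D * D ^ (p-1) := by
        rw [show p = 1 + (p-1) by ring, ENNReal.rpow_add _ _ hD0 hDfin, ENNReal.rpow_one]
        rw [show 1 + (p-1) - 1 = p - 1 by ring]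
      have hcan : D * D ^ (p-1) ≤ ((ENNReal.ofReal (s-1)) ^ p * R) * D ^ (p-1) := by
        rw [← hDp]
        calc D ^ p ≤ (ENNReal.ofReal (s-1)) ^ p * R * D ^ (p-1) := hraise
          _ = ((ENNReal.ofReal (s-1)) ^ p * R) * D ^ (p-1) := by ring
      have hne0 : D ^ (p-1) ≠ 0 := by
        rw [Ne, ENNReal.rpow_eq_zero_iff]
        push_neg
        exact ⟨fun h => absurd h hD0, fun h => absurd h hDfin⟩
      have hnetop : D ^ (p-1) ≠ ⊤ :=
        (ENNReal.rpow_lt_top_of_nonneg (by linarith) hDfin).ne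
      exact (ENNReal.mul_le_mul_iff_left hne0 hnetop).1 hcan
  calc ∫⁻ x, (∑ Q ∈ F, Set.indicator Q (fun _ => lam Q / σ Q) x) ^ s ∂σ
      ≤ ENNReal.ofReal s * D := hstepA
    _ ≤ ENNReal.ofReal s * ((ENNReal.ofReal (s-1)) ^ (s-1) * R) := mul_le_mul_right hkey _
    _ = ENNReal.ofReal s * (ENNReal.ofReal (s-1)) ^ (s-1) * R := by ring



/-- The `L^s` covering lemma: for `1 < s < ∞`,
`∫ (Σ_Q (λ_Q/σ(Q)) 1_Q)^s dσ ≤ C_s Σ_Q λ_Q (σ(Q)⁻¹ Σ_{Q'⊆Q} λ_{Q'})^{s-1}`. -/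
theorem lintegral_sum_indicator_rpow_le (s : ℝ) (hs : 1 < s) :
    ∃ C : ℝ≥0∞, 0 < C ∧ C ≠ ∞ ∧
      ∀ (X : Type) [MeasurableSpace X] (σ : Measure X) (𝒟 : Set (Set X)),
        (∀ Q ∈ 𝒟, MeasurableSet Q) →
        (∀ Q ∈ 𝒟, ∀ Q' ∈ 𝒟, Q ⊆ Q' ∨ Q' ⊆ Q ∨ Disjoint Q Q') →
        ∀ lam : Set X → ℝ≥0∞,
        (∫⁻ x, (∑' Q : 𝒟, Set.indicator (Q : Set X)
              (fun _ => lam Q / σ Q) x) ^ s ∂σ)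
          ≤ C * ∑' Q : 𝒟, lam Q *
              ((∑' Q' : {R : Set X // R ∈ 𝒟 ∧ R ⊆ (Q : Set X)}, lam Q') / σ Q)
                ^ (s - 1) := by
  classical
  have hs0 : (0:ℝ) < s := by linarith
  have hs10 : (0:ℝ) < s - 1 := by linarith
  set C : ℝ≥0∞ := ENNReal.ofReal s * (ENNReal.ofReal (s-1)) ^ (s-1) + ENNReal.ofReal s
    with hC
  have hCpos : 0 < C := by
    have : (0:ℝ≥0∞) < ENNReal.ofReal s := ENNReal.ofReal_pos.2 hs0
    exact lt_of_lt_of_le this le_add_self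
  have hC0 : C ≠ 0 := ne_of_gt hCpos
  have hCtop : C ≠ ⊤ := by
    rw [hC]
    refine ENNReal.add_ne_top.2 ⟨ENNReal.mul_ne_top ENNReal.ofReal_ne_top ?_,
      ENNReal.ofReal_ne_top⟩
    exact (ENNReal.rpow_lt_top_of_nonneg (by linarith) ENNReal.ofReal_ne_top).ne
  refine ⟨C, hCpos, hCtop, ?_⟩
  intro X _ σ 𝒟 hmeas hdyad lam
  set bigA : Set X → ℝ≥0∞ :=
    fun Q => ∑' Q' : {R : Set X // R ∈ 𝒟 ∧ R ⊆ Q}, lam Q'.val with hbigA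
  set term : Set X → ℝ≥0∞ := fun Q => lam Q * (bigA Q / σ Q) ^ (s-1) with hterm
  show (∫⁻ x, (∑' Q : 𝒟, Set.indicator (Q : Set X) (fun _ => lam Q / σ Q) x) ^ s ∂σ)
      ≤ C * ∑' Q : 𝒟, term Q.val
  by_cases hRHS : (∑' Q : 𝒟, term Q.val) = ⊤
  · rw [hRHS, ENNReal.mul_top hC0]
    exact le_top
  -- the nontrivial case
  have hterm_netop : ∀ Q : 𝒟, term Q.val ≠ ⊤ := ENNReal.ne_top_of_tsum_ne_top hRHS
  set S : Set (Set X) := {Q | Q ∈ 𝒟 ∧ term Q ≠ 0} with hS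
  have hS𝒟 : S ⊆ 𝒟 := fun Q hQ => hQ.1
  have hScount : S.Countable := by
    have h1 : (Function.support (fun Q : 𝒟 => term Q.val)).Countable :=
      Summable.countable_support_ennreal hRHS
    refine Set.Countable.mono ?_ (h1.image Subtype.val)
    rintro Q ⟨hQ𝒟, hQne⟩
    exact ⟨⟨Q, hQ𝒟⟩, hQne, rfl⟩
  have hlam_le_bigA : ∀ Q, Q ∈ 𝒟 → lam Q ≤ bigA Q := by
    intro Q hQ
    exact ENNReal.le_tsum (⟨Q, hQ, subset_rfl⟩ : {R : Set X // R ∈ 𝒟 ∧ R ⊆ Q})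
  have ha_zero : ∀ Q ∈ 𝒟, Q ∉ S → lam Q / σ Q = 0 := by
    intro Q hQ𝒟 hQS
    have hterm0 : term Q = 0 := by
      by_contra hne
      exact hQS ⟨hQ𝒟, hne⟩
    rcases mul_eq_zero.1 hterm0 with hl | hr
    · rw [hl]; simp
    · rw [ENNReal.rpow_eq_zero_iff_of_pos hs10] at hr
      rcases ENNReal.div_eq_zero_iff.1 hr with hA | hσ
      · have : lam Q = 0 := le_antisymm (hA ▸ hlam_le_bigA Q hQ𝒟) zero_le
        rw [this]; simp
      · rw [hσ]; simp
  have hSfacts : ∀ Q ∈ S, lam Q ≠ ⊤ ∧ σ Q ≠ 0 := by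
    intro Q hQS
    obtain ⟨hQ𝒟, htne⟩ := hQS
    have htnetop : term Q ≠ ⊤ := hterm_netop ⟨Q, hQ𝒟⟩
    have hlamne : lam Q ≠ 0 := by
      intro h0
      exact htne (show lam Q * (bigA Q / σ Q) ^ (s-1) = 0 by simp [h0])
    have hrne : ((bigA Q / σ Q) ^ (s-1) : ℝ≥0∞) ≠ 0 := by
      intro h0
      exact htne (show lam Q * (bigA Q / σ Q) ^ (s-1) = 0 by simp [h0])
    constructor
    · intro hlamtop
      refine htnetop ?_
      show lam Q * (bigA Q / σ Q) ^ (s-1) = ⊤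
      rw [hlamtop, ENNReal.top_mul hrne]
    · intro hσ0
      have hAne : bigA Q ≠ 0 := by
        intro h0
        exact hlamne (le_antisymm (h0 ▸ hlam_le_bigA Q hQ𝒟) zero_le)
      have hrtop : ((bigA Q / σ Q) ^ (s-1) : ℝ≥0∞) = ⊤ := by
        rw [hσ0, ENNReal.div_zero hAne, ENNReal.top_rpow_of_pos hs10]
      refine htnetop ?_
      show lam Q * (bigA Q / σ Q) ^ (s-1) = ⊤
      rw [hrtop, ENNReal.mul_top hlamne]
  -- exhaustion
  obtain ⟨F, hFmono, hFS, hcov⟩ : ∃ F : ℕ → Finset (Set X),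
      Monotone F ∧ (∀ n, ↑(F n) ⊆ S) ∧ (∀ Q ∈ S, ∃ n, Q ∈ F n) := by
    rcases S.eq_empty_or_nonempty with hSe | hSne
    · exact ⟨fun _ => ∅, monotone_const, fun n => by simp,
        fun Q hQ => by rw [hSe] at hQ; exact absurd hQ (Set.notMem_empty Q)⟩
    · obtain ⟨gnum, hgnum⟩ := hScount.exists_eq_range hSne
      refine ⟨fun n => (Finset.range (n+1)).image gnum, ?_, ?_, ?_⟩
      · intro n m hnm
        exact Finset.image_subset_image (Finset.range_subset_range.2 (by omega))
      · intro n Q hQ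
        obtain ⟨k, _, hk⟩ := Finset.mem_image.1 hQ
        rw [hgnum]
        exact ⟨k, hk⟩
      · intro Q hQ
        rw [hgnum] at hQ
        obtain ⟨k, hk⟩ := hQ
        exact ⟨k, Finset.mem_image.2 ⟨k, Finset.mem_range.2 (by omega), hk⟩⟩
  set fn : ℕ → X → ℝ≥0∞ :=
    fun n x => ∑ Q ∈ F n, Set.indicator Q (fun _ => lam Q / σ Q) x with hfn
  have hrep : ∀ x, (∑' Q : 𝒟, Set.indicator (Q : Set X) (fun _ => lam Q / σ Q) x)
      = ⨆ n, fn n x := by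
    intro x
    refine tsum_subtype_eq_iSup' (fun Q => Set.indicator Q (fun _ => lam Q / σ Q) x)
      𝒟 S hS𝒟 ?_ F hFmono hFS hcov
    intro Q hQ𝒟 htne
    by_contra hQS
    refine htne ?_
    show Set.indicator Q (fun _ => lam Q / σ Q) x = 0
    rw [ha_zero Q hQ𝒟 hQS]
    simp
  have hfnmono : ∀ x, Monotone (fun n => fn n x) := by
    intro x n m hnm
    exact Finset.sum_le_sum_of_subset (hFmono hnm)
  have hfnmeas : ∀ n, Measurable (fn n) := by
    intro n
    refine Finset.measurable_sum _ fun Q hQ => ?_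
    exact measurable_const.indicator (hmeas Q (hS𝒟 (hFS n hQ)))
  -- monotone convergence
  have hlim : ∫⁻ x, (∑' Q : 𝒟, Set.indicator (Q : Set X) (fun _ => lam Q / σ Q) x) ^ s ∂σ
      = ⨆ n, ∫⁻ x, (fn n x) ^ s ∂σ := by
    rw [← lintegral_iSup (fun n => (hfnmeas n).pow measurable_const)
      (fun n m hnm x => ENNReal.rpow_le_rpow (hfnmono x hnm) hs0.le)]
    congr 1
    funext x
    rw [hrep x, iSup_rpow' (hfnmono x) hs0]
  -- domination of the finite sums
  have hRmaj : ∀ n, ∑ Q ∈ F n, lam Q *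
      ((∑ Q' ∈ (F n).filter (fun R => R ⊆ Q), lam Q') / σ Q) ^ (s-1)
      ≤ ∑' Q : 𝒟, term Q.val := by
    intro n
    have hstep1 : ∀ Q ∈ F n, lam Q *
        ((∑ Q' ∈ (F n).filter (fun R => R ⊆ Q), lam Q') / σ Q) ^ (s-1) ≤ term Q := by
      intro Q hQ
      refine mul_le_mul_right (ENNReal.rpow_le_rpow
        (ENNReal.div_le_div_right ?_ _) (by linarith)) _
      -- finite inner sum ≤ bigA Q
      have : ∀ Q' ∈ (F n).filter (fun R => R ⊆ Q), lam Q'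
          = Set.indicator {R : Set X | R ∈ 𝒟 ∧ R ⊆ Q} lam Q' := by
        intro Q' hQ'
        obtain ⟨hQ'F, hQ'Q⟩ := Finset.mem_filter.1 hQ'
        exact (Set.indicator_of_mem
          (show Q' ∈ {R : Set X | R ∈ 𝒟 ∧ R ⊆ Q} from ⟨hS𝒟 (hFS n hQ'F), hQ'Q⟩) lam).symm
      rw [Finset.sum_congr rfl this]
      refine le_trans (ENNReal.sum_le_tsum _) (le_of_eq ?_)
      exact (tsum_subtype {R : Set X | R ∈ 𝒟 ∧ R ⊆ Q} lam).symm
    calc ∑ Q ∈ F n, lam Q *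
        ((∑ Q' ∈ (F n).filter (fun R => R ⊆ Q), lam Q') / σ Q) ^ (s-1)
        ≤ ∑ Q ∈ F n, term Q := Finset.sum_le_sum hstep1
      _ = ∑ Q ∈ F n, Set.indicator 𝒟 term Q := by
          refine Finset.sum_congr rfl fun Q hQ => ?_
          exact (Set.indicator_of_mem (hS𝒟 (hFS n hQ)) term).symm
      _ ≤ ∑' Q : Set X, Set.indicator 𝒟 term Q := ENNReal.sum_le_tsum _
      _ = ∑' Q : 𝒟, term Q.val := (tsum_subtype 𝒟 term).symm
  -- conclude, splitting on the size of s
  rw [hlim]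
  refine iSup_le fun n => ?_
  rcases lt_or_ge s 2 with h2 | h2
  · refine le_trans (branch1 σ 𝒟 hmeas hdyad lam hs h2 (F n)
      (fun Q hQ => hS𝒟 (hFS n hQ))) ?_
    exact mul_le_mul' le_add_self (hRmaj n)
  · refine le_trans (branch2 σ 𝒟 hmeas hdyad lam h2 (F n)
      (fun Q hQ => hS𝒟 (hFS n hQ))
      (fun Q hQ => (hSfacts Q (hFS n hQ)).1)
      (fun Q hQ => (hSfacts Q (hFS n hQ)).2)) ?_
    exact mul_le_mul' (self_le_add_right _ _) (hRmaj n)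
end

section
/- Let 𝒟 be a dyadic grid on a non-atomic measure space (X, μ), let 0 < β₁, …, β_m with Σᵢ βᵢ = β < 1, let Q ∈ 𝒟 with 0 < μ(Q) < ∞, let 𝒮 ⊆ {Q' ∈ 𝒟 : Q' ⊆ Q} be a family admitting pairwise disjoint subsets E(Q') ⊆ Q' with μ(E(Q')) ≥ η μ(Q'), and let w₁, …, w_m ≥ 0 be locally integrable. Then Σ_{Q' ∈ 𝒮} μ(Q') Πᵢ ⟨wᵢ⟩_{Q'}^{βᵢ} ≤ (C/η) · max(1/β, 1/(1−β)) · μ(Q) · Πᵢ ⟨wᵢ⟩_Q^{βᵢ}, with C absolute. -/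
open MeasureTheory ENNReal
open scoped Classical NNReal

private lemma rpow_sum_aux (x : ℝ≥0∞) (hx0 : x ≠ 0) (hxt : x ≠ ∞) {ι : Type*}
    (s : Finset ι) (f : ι → ℝ) : x ^ (∑ i ∈ s, f i) = ∏ i ∈ s, x ^ f i := by
  classical
  induction s using Finset.cons_induction with
  | empty => simp
  | cons a s ha ih =>
      rw [Finset.sum_cons, Finset.prod_cons, ENNReal.rpow_add _ _ hx0 hxt, ih]

private lemma numeric_ineq {b : ℝ} (hb0 : 0 ≤ b) (hb1 : b < 1) :
    (2:ℝ) ^ b + (2:ℝ) ^ (b - 1) + 6 / (1 - b) * (2:ℝ) ^ (b - 1) ≤ 6 / (1 - b) := by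
  have hε : 0 < 1 - b := by linarith
  have h2 : (2:ℝ) ^ b ≤ 1 + b := by
    have := Real.geom_mean_le_arith_mean2_weighted (by linarith : (0:ℝ) ≤ 1 - b) hb0
      zero_le_one (by norm_num : (0:ℝ) ≤ 2) (by ring)
    rw [Real.one_rpow] at this
    linarith
  have hsub : (2:ℝ) ^ (b - 1) = (2:ℝ) ^ b / 2 := by
    rw [Real.rpow_sub (by norm_num), Real.rpow_one]
  have hu0 : (0:ℝ) < (2:ℝ) ^ b := Real.rpow_pos_of_pos (by norm_num) _
  set u := (2:ℝ) ^ b with hu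
  set c := 6 / (1 - b) with hcdef
  have hc : c * (1 - b) = 6 := div_mul_cancel₀ _ hε.ne'
  rw [hsub] at *
  have h3 : c * (u / 2) * (1 - b) = 3 * u := by
    rw [mul_right_comm, hc]; ring
  nlinarith [mul_le_mul_of_nonneg_right h2 hε.le, h3, hu0, hε]

private lemma holder_finset {m : ℕ} {β : Fin m → ℝ} (hβ : ∀ i, 0 ≤ β i)
    (hβ1 : ∑ i, β i < 1) {ι : Type*} (s : Finset ι)
    (a : Fin m → ι → ℝ≥0∞) (b : ι → ℝ≥0∞) :
    ∑ j ∈ s, (b j ^ (1 - ∑ i, β i) * ∏ i, a i j ^ β i)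
      ≤ (∑ j ∈ s, b j) ^ (1 - ∑ i, β i) * ∏ i, (∑ j ∈ s, a i j) ^ β i := by
  classical
  letI : MeasurableSpace ι := ⊤
  have h1b : (0:ℝ) < 1 - ∑ i, β i := by linarith
  set g : Option (Fin m) → ι → ℝ≥0∞ := fun o j =>
    if j ∈ s then o.elim (b j) (fun i => a i j) else 0 with hg
  set p : Option (Fin m) → ℝ := fun o => o.elim (1 - ∑ i, β i) β with hp
  have hmeasf : ∀ (f : ι → ℝ≥0∞), Measurable f := fun f t _ => trivial
  have hmeas : ∀ o ∈ (Finset.univ : Finset (Option (Fin m))),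
      AEMeasurable (g o) (Measure.count : Measure ι) :=
    fun o _ => (hmeasf (g o)).aemeasurable
  have hpsum : ∑ o : Option (Fin m), p o = 1 := by
    rw [Fintype.sum_option]
    show (1 - ∑ i, β i) + ∑ i, β i = 1
    ring
  have hpnn : ∀ o ∈ (Finset.univ : Finset (Option (Fin m))), 0 ≤ p o := by
    rintro (_ | i) _
    · exact h1b.le
    · exact hβ i
  have H := ENNReal.lintegral_prod_norm_pow_le (μ := (Measure.count : Measure ι))
      Finset.univ hmeas hpsum hpnn
  rw [MeasureTheory.lintegral_count' (hmeasf _)] at H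
  have hzero : ∀ j ∉ s, (∏ o, g o j ^ p o) = 0 := by
    intro j hj
    rw [Fintype.prod_option]
    have h0 : g none j = 0 := by simp [hg, hj]
    rw [h0]
    have : (0:ℝ≥0∞) ^ p none = 0 := ENNReal.zero_rpow_of_pos h1b
    rw [this, zero_mul]
  rw [tsum_eq_sum hzero] at H
  calc ∑ j ∈ s, (b j ^ (1 - ∑ i, β i) * ∏ i, a i j ^ β i)
      = ∑ j ∈ s, ∏ o, g o j ^ p o := by
        refine Finset.sum_congr rfl fun j hj => ?_
        rw [Fintype.prod_option]
        simp [hg, hp, hj]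
    _ ≤ ∏ o, (∫⁻ j, g o j ∂(Measure.count : Measure ι)) ^ p o := H
    _ = (∑ j ∈ s, b j) ^ (1 - ∑ i, β i) * ∏ i, (∑ j ∈ s, a i j) ^ β i := by
        rw [Fintype.prod_option]
        congr 1
        · rw [MeasureTheory.lintegral_count' (hmeasf _),
            tsum_eq_sum (f := g none) (s := s) (fun j hj => by simp [hg, hj])]
          congr 1
          exact Finset.sum_congr rfl fun j hj => by simp [hg, hj]
        · refine Finset.prod_congr rfl fun i _ => ?_
          rw [MeasureTheory.lintegral_count' (hmeasf _),
            tsum_eq_sum (f := g (some i)) (s := s) (fun j hj => by simp [hg, hj])]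
          congr 1
          exact Finset.sum_congr rfl fun j hj => by simp [hg, hj]

private lemma eq0_aux {X : Type} [MeasurableSpace X] (μ : Measure X) {m : ℕ} (β : Fin m → ℝ)
    (hβ : ∀ i, 0 ≤ β i) (w : Fin m → X → ℝ≥0∞) {P : Set X} (h0 : μ P ≠ 0) (ht : μ P ≠ ∞) :
    (∏ i, (avg μ P (w i)) ^ β i) * μ P ^ (∑ i, β i)
      = ∏ i, (∫⁻ x in P, w i x ∂μ) ^ β i := by
  rw [rpow_sum_aux (μ P) h0 ht, ← Finset.prod_mul_distrib]
  refine Finset.prod_congr rfl fun i _ => ?_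
  rw [← ENNReal.mul_rpow_of_nonneg _ _ (hβ i)]
  congr 1
  exact ENNReal.div_mul_cancel h0 ht

private lemma eq1_aux {X : Type} [MeasurableSpace X] (μ : Measure X) {m : ℕ} (β : Fin m → ℝ)
    (hβ : ∀ i, 0 ≤ β i) (hβ1 : ∑ i, β i < 1) (w : Fin m → X → ℝ≥0∞) {P : Set X}
    (ht : μ P ≠ ∞) :
    μ P * ∏ i, (avg μ P (w i)) ^ β i
      = μ P ^ (1 - ∑ i, β i) * ∏ i, (∫⁻ x in P, w i x ∂μ) ^ β i := by
  by_cases h0 : μ P = 0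
  · rw [h0, zero_mul, ENNReal.zero_rpow_of_pos (by linarith : (0:ℝ) < 1 - ∑ i, β i), zero_mul]
  · rw [← eq0_aux μ β hβ w h0 ht]
    have hpow : μ P ^ (1 - ∑ i, β i) * μ P ^ (∑ i, β i) = μ P := by
      rw [← ENNReal.rpow_add _ _ h0 ht, sub_add_cancel, ENNReal.rpow_one]
    calc μ P * ∏ i, (avg μ P (w i)) ^ β i
        = (μ P ^ (1 - ∑ i, β i) * μ P ^ (∑ i, β i)) * ∏ i, (avg μ P (w i)) ^ β i := by
          rw [hpow]
      _ = μ P ^ (1 - ∑ i, β i) * ((∏ i, (avg μ P (w i)) ^ β i) * μ P ^ (∑ i, β i)) := by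
          ring

private lemma key_lemma {X : Type} [MeasurableSpace X] (μ : Measure X)
    {𝒟 : Set (Set X)} (h𝒟m : ∀ Q ∈ 𝒟, MeasurableSet Q)
    (h𝒟n : ∀ Q ∈ 𝒟, ∀ Q' ∈ 𝒟, Q ⊆ Q' ∨ Q' ⊆ Q ∨ Disjoint Q Q')
    {m : ℕ} {β : Fin m → ℝ} (hβpos : ∀ i, 0 < β i) (hβ1 : ∑ i, β i < 1)
    {𝒮 : Set (Set X)} (h𝒮𝒟 : ∀ P ∈ 𝒮, P ∈ 𝒟)
    {η : ℝ≥0∞} (hη0 : η ≠ 0) (hη1 : η ≤ 1)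
    {E : Set X → Set X}
    (hE : ∀ Q' ∈ 𝒮, E Q' ⊆ Q' ∧ MeasurableSet (E Q') ∧ η * μ Q' ≤ μ (E Q'))
    (hEdisj : ∀ Q' ∈ 𝒮, ∀ Q'' ∈ 𝒮, Q' ≠ Q'' → Disjoint (E Q') (E Q''))
    (w : Fin m → X → ℝ≥0∞) :
    ∀ (n : ℕ) (F : Finset (Set X)), F.card ≤ n → ∀ R : Set X, μ R ≠ ∞ →
      (∀ P ∈ F, P ∈ 𝒮) → (∀ P ∈ F, P ⊆ R) →
      ∑ P ∈ F, μ P * ∏ i, (avg μ P (w i)) ^ β i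
        ≤ (ENNReal.ofReal (6 / (1 - ∑ i, β i)) / η) *
            (μ R ^ (1 - ∑ i, β i) * ∏ i, (∫⁻ x in R, w i x ∂μ) ^ β i) := by
  have hβnn : ∀ i, 0 ≤ β i := fun i => (hβpos i).le
  set b := ∑ i, β i with hb
  have hb0 : 0 ≤ b := Finset.sum_nonneg fun i _ => hβnn i
  have h1b : (0:ℝ) < 1 - b := by linarith
  set c := ENNReal.ofReal (6 / (1 - b)) with hc
  set K := ENNReal.ofReal ((2:ℝ) ^ b) with hK
  set K₂ := ENNReal.ofReal ((2:ℝ) ^ (b - 1)) with hK₂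
  have hKrpow : K = (2:ℝ≥0∞) ^ b := by
    rw [hK, ← ENNReal.ofReal_rpow_of_pos (by norm_num : (0:ℝ) < 2), ENNReal.ofReal_ofNat]
  have hK₂rpow : K₂ = (2:ℝ≥0∞) ^ (b - 1) := by
    rw [hK₂, ← ENNReal.ofReal_rpow_of_pos (by norm_num : (0:ℝ) < 2), ENNReal.ofReal_ofNat]
  have hKKc : K + K₂ + c * K₂ ≤ c := by
    rw [hK, hK₂, hc, ← ENNReal.ofReal_mul (by positivity),
      ← ENNReal.ofReal_add (by positivity) (by positivity),
      ← ENNReal.ofReal_add (by positivity) (by positivity)]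
    exact ENNReal.ofReal_le_ofReal (numeric_ineq hb0 (by linarith))
  have hc0 : c ≠ 0 := (ENNReal.ofReal_pos.mpr (by positivity)).ne'
  have hηtop : η ≠ ∞ := (hη1.trans_lt (by norm_num)).ne
  have hηinv : (1:ℝ≥0∞) ≤ η⁻¹ := ENNReal.one_le_inv.mpr hη1
  intro n
  induction n with
  | zero =>
      intro F hF _ _ _ _
      rw [Finset.card_eq_zero.mp (Nat.le_zero.mp hF)]
      simp
  | succ n ih =>
      intro F hFcard R hRtop hF𝒮 hFR
      by_cases hV0 : μ R = 0
      · rw [Finset.sum_eq_zero (fun P hP => by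
          have : μ P = 0 := le_antisymm (le_trans (measure_mono (hFR P hP)) hV0.le) zero_le
          simp [this])]
        exact zero_le
      by_cases hT0' : ∃ i, (∫⁻ x in R, w i x ∂μ) = 0
      · obtain ⟨i₀, hi₀⟩ := hT0'
        rw [Finset.sum_eq_zero (fun P hP => ?_)]
        · exact zero_le
        rcases eq_or_ne (μ P) 0 with h | h
        · simp [h]
        · have hint : (∫⁻ x in P, w i₀ x ∂μ) = 0 :=
            le_antisymm ((lintegral_mono_set (hFR P hP)).trans hi₀.le) zero_le
          have havg : avg μ P (w i₀) = 0 := by rw [avg, hint, ENNReal.zero_div]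
          rw [Finset.prod_eq_zero (Finset.mem_univ i₀)
            (by rw [havg]; exact ENNReal.zero_rpow_of_pos (hβpos i₀)), mul_zero]
      push_neg at hT0'
      by_cases hTtop' : ∃ i, (∫⁻ x in R, w i x ∂μ) = ∞
      · obtain ⟨i₀, hi₀⟩ := hTtop'
        have hprod : (∏ i, (∫⁻ x in R, w i x ∂μ) ^ β i) = ∞ := by
          rw [Finset.prod_eq_mul_prod_sdiff_singleton_of_mem (Finset.mem_univ i₀), hi₀,
            ENNReal.top_rpow_of_pos (hβpos i₀)]
          refine ENNReal.top_mul ?_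
          rw [Ne, Finset.prod_eq_zero_iff]
          rintro ⟨i, _, hi⟩
          rw [ENNReal.rpow_eq_zero_iff] at hi
          rcases hi with ⟨h1, _⟩ | ⟨_, h2⟩
          · exact hT0' i h1
          · linarith [hβpos i]
        rw [hprod, ENNReal.mul_top, ENNReal.mul_top]
        · exact le_top
        · exact (ENNReal.div_pos hc0 hηtop).ne'
        · intro h
          rw [ENNReal.rpow_eq_zero_iff] at h
          rcases h with ⟨h1, _⟩ | ⟨h2, _⟩
          · exact hV0 h1
          · exact hRtop h2
      push_neg at hTtop'
      -- main case
      set V := μ R with hV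
      set T : Fin m → ℝ≥0∞ := fun i => ∫⁻ x in R, w i x ∂μ with hT
      set A := ∏ i, (avg μ R (w i)) ^ β i with hA
      set TT := ∏ i, T i ^ β i with hTT
      have hVtop : V ≠ ∞ := hRtop
      have havgfin : ∀ i, avg μ R (w i) ≠ ∞ := by
        intro i
        rw [avg]
        intro h
        rw [ENNReal.div_eq_top] at h
        rcases h with ⟨_, h2⟩ | ⟨h1, _⟩
        · exact hV0 h2
        · exact hTtop' i h1
      have havg0 : ∀ i, avg μ R (w i) ≠ 0 := by
        intro i
        rw [avg]
        intro h
        rw [ENNReal.div_eq_zero_iff] at h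
        rcases h with h | h
        · exact hT0' i h
        · exact hVtop h
      have hA0 : A ≠ 0 := by
        rw [hA, Ne, Finset.prod_eq_zero_iff]
        rintro ⟨i, _, hi⟩
        rw [ENNReal.rpow_eq_zero_iff] at hi
        rcases hi with ⟨h1, _⟩ | ⟨_, h2⟩
        · exact havg0 i h1
        · linarith [hβpos i]
      have hAtop : A ≠ ∞ := by
        rw [hA]
        exact (ENNReal.prod_lt_top fun i _ =>
          ENNReal.rpow_lt_top_of_nonneg (hβnn i) (havgfin i)).ne
      have hAV : V * A = V ^ (1 - b) * TT := by
        have := eq1_aux μ β hβnn hβ1 w (P := R) hRtop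
        rw [← hb] at this
        exact this
      have hTA : TT = A * V ^ b := by
        have := eq0_aux μ β hβnn w (P := R) hV0 hVtop
        rw [← hb] at this
        exact this.symm
      set F₁ := F.filter (fun P => ∏ i, (avg μ P (w i)) ^ β i ≤ K * A) with hF₁
      set F₂ := F.filter (fun P => ¬(∏ i, (avg μ P (w i)) ^ β i ≤ K * A)) with hF₂
      have hF₂sub : F₂ ⊆ F := Finset.filter_subset _ _
      -- sparseness bound
      have hsparse : ∀ F' : Finset (Set X), F' ⊆ F → ∑ P ∈ F', μ P ≤ V / η := by
        intro F' hF'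
        have h1 : ∑ P ∈ F', η * μ P ≤ ∑ P ∈ F', μ (E P) :=
          Finset.sum_le_sum fun P hP => (hE P (hF𝒮 P (hF' hP))).2.2
        have h2 : ∑ P ∈ F', μ (E P) = μ (⋃ P ∈ F', E P) :=
          (measure_biUnion_finset
            (fun P hP P' hP' hne =>
              hEdisj P (hF𝒮 P (hF' hP)) P' (hF𝒮 P' (hF' hP')) hne)
            (fun P hP => (hE P (hF𝒮 P (hF' hP))).2.1)).symm
        have h3 : μ (⋃ P ∈ F', E P) ≤ V :=
          measure_mono (Set.iUnion₂_subset fun P hP =>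
            ((hE P (hF𝒮 P (hF' hP))).1).trans (hFR P (hF' hP)))
        rw [ENNReal.le_div_iff_mul_le (Or.inl hη0) (Or.inl hηtop)]
        calc (∑ P ∈ F', μ P) * η = ∑ P ∈ F', η * μ P := by
              rw [Finset.sum_mul]
              exact Finset.sum_congr rfl fun _ _ => mul_comm _ _
          _ ≤ ∑ P ∈ F', μ (E P) := h1
          _ = μ (⋃ P ∈ F', E P) := h2
          _ ≤ V := h3
      have hB1 : ∑ P ∈ F₁, μ P * ∏ i, (avg μ P (w i)) ^ β i
          ≤ K * ((V ^ (1 - b) * TT) * η⁻¹) := by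
        calc ∑ P ∈ F₁, μ P * ∏ i, (avg μ P (w i)) ^ β i
            ≤ ∑ P ∈ F₁, μ P * (K * A) :=
              Finset.sum_le_sum fun P hP =>
                mul_le_mul_right (Finset.mem_filter.mp hP).2 _
          _ = (∑ P ∈ F₁, μ P) * (K * A) := by rw [← Finset.sum_mul]
          _ ≤ V / η * (K * A) := mul_le_mul_left (hsparse F₁ (Finset.filter_subset _ _)) _
          _ = K * ((V * A) * η⁻¹) := by rw [div_eq_mul_inv]; ring
          _ = K * ((V ^ (1 - b) * TT) * η⁻¹) := by rw [hAV]
      -- maximal cubes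
      set G := F₂.filter (fun P => ∀ P' ∈ F₂, P ⊆ P' → P = P') with hG
      have hGsub : G ⊆ F₂ := Finset.filter_subset _ _
      have hGF : G ⊆ F := hGsub.trans hF₂sub
      have hGmax : ∀ P ∈ F₂, ∃ J ∈ G, P ⊆ J := by
        intro P hP
        obtain ⟨M, hMmem, hMmax⟩ := Finset.exists_maximal (s :=
          F₂.filter (fun P' => P ⊆ P'))
          ⟨P, Finset.mem_filter.mpr ⟨hP, subset_rfl⟩⟩
        obtain ⟨hMF₂, hPM⟩ := Finset.mem_filter.mp hMmem
        refine ⟨M, Finset.mem_filter.mpr ⟨hMF₂, fun P' hP' hMP' => ?_⟩, hPM⟩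
        exact le_antisymm hMP' (hMmax (Finset.mem_filter.mpr ⟨hP', hPM.trans hMP'⟩) hMP')
      have hGdisj : (↑G : Set (Set X)).PairwiseDisjoint (fun (J : Set X) => J) := by
        intro J hJ J' hJ' hne
        have hJG := Finset.mem_filter.mp (Finset.mem_coe.mp hJ)
        have hJ'G := Finset.mem_filter.mp (Finset.mem_coe.mp hJ')
        have hJ𝒟 := h𝒮𝒟 J (hF𝒮 J (hF₂sub hJG.1))
        have hJ'𝒟 := h𝒮𝒟 J' (hF𝒮 J' (hF₂sub hJ'G.1))
        rcases h𝒟n J hJ𝒟 J' hJ'𝒟 with h | h | h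
        · exact absurd (hJG.2 J' hJ'G.1 h) hne
        · exact absurd ((hJ'G.2 J hJG.1 h).symm) hne
        · exact h
      have hGmeas : ∀ J ∈ G, MeasurableSet J :=
        fun J hJ => h𝒟m J (h𝒮𝒟 J (hF𝒮 J (hGF hJ)))
      set s := ∑ J ∈ G, μ J with hs
      have hsV' : s ≤ V := by
        rw [hs, ← measure_biUnion_finset hGdisj hGmeas]
        exact measure_mono (Set.iUnion₂_subset fun J hJ => hFR J (hGF hJ))
      have hstop : s ≠ ∞ := (hsV'.trans_lt (lt_top_iff_ne_top.mpr hVtop)).ne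
      have hJtopall : ∀ J ∈ G, μ J ≠ ∞ := fun J hJ =>
        ((measure_mono (hFR J (hGF hJ))).trans_lt (lt_top_iff_ne_top.mpr hRtop)).ne
      have hsum_eq : ∑ J ∈ G, μ J * ∏ i, (avg μ J (w i)) ^ β i
          = ∑ J ∈ G, (μ J ^ (1 - b) * ∏ i, (∫⁻ x in J, w i x ∂μ) ^ β i) := by
        refine Finset.sum_congr rfl fun J hJ => ?_
        have := eq1_aux μ β hβnn hβ1 w (P := J) (hJtopall J hJ)
        rw [← hb] at this
        exact this
      have hHold : ∑ J ∈ G, (μ J ^ (1 - b) * ∏ i, (∫⁻ x in J, w i x ∂μ) ^ β i)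
          ≤ s ^ (1 - b) * TT := by
        have h0 := holder_finset hβnn hβ1 G (fun i J => ∫⁻ x in J, w i x ∂μ) (fun J => μ J)
        rw [← hb] at h0
        refine h0.trans (mul_le_mul' le_rfl ?_)
        refine Finset.prod_le_prod' fun i _ => ENNReal.rpow_le_rpow ?_ (hβnn i)
        rw [← lintegral_biUnion_finset hGdisj hGmeas (w i)]
        exact lintegral_mono_set (Set.iUnion₂_subset fun J hJ => hFR J (hGF hJ))
      have hs_half : s ≤ V / 2 := by
        rcases eq_or_ne s 0 with h | h
        · rw [h]; exact zero_le
        · have hbpos : 0 < b := by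
            rcases Nat.eq_zero_or_pos m with hm | hm
            · exfalso
              haveI : IsEmpty (Fin m) := by rw [hm]; infer_instance
              obtain ⟨J, hJ, _⟩ := Finset.exists_ne_zero_of_sum_ne_zero h
              have hJF₂ := Finset.mem_filter.mp (hGsub hJ)
              refine hJF₂.2 ?_
              have hbz : b = 0 := by rw [hb, Finset.univ_eq_empty, Finset.sum_empty]
              have hK1 : K = 1 := by rw [hK, hbz, Real.rpow_zero, ENNReal.ofReal_one]
              have hA1 : A = 1 := by rw [hA, Finset.univ_eq_empty, Finset.prod_empty]
              rw [Finset.univ_eq_empty, Finset.prod_empty, hK1, hA1, mul_one]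
            · calc (0:ℝ) < β ⟨0, hm⟩ := hβpos _
                _ ≤ b := by
                    rw [hb]
                    exact Finset.single_le_sum (fun i _ => hβnn i) (Finset.mem_univ _)
          have h1 : K * A * s ≤ s ^ (1 - b) * TT := by
            calc K * A * s = ∑ J ∈ G, K * A * μ J := by rw [← Finset.mul_sum]
              _ ≤ ∑ J ∈ G, μ J * ∏ i, (avg μ J (w i)) ^ β i := by
                  refine Finset.sum_le_sum fun J hJ => ?_
                  have hlt := not_le.mp (Finset.mem_filter.mp (hGsub hJ)).2
                  calc K * A * μ J = μ J * (K * A) := mul_comm _ _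
                    _ ≤ μ J * ∏ i, (avg μ J (w i)) ^ β i :=
                        mul_le_mul_right hlt.le _
              _ = ∑ J ∈ G, (μ J ^ (1 - b) * ∏ i, (∫⁻ x in J, w i x ∂μ) ^ β i) := hsum_eq
              _ ≤ s ^ (1 - b) * TT := hHold
          rw [hTA] at h1
          have h2 : A * (K * s) ≤ A * (s ^ (1 - b) * V ^ b) := by
            calc A * (K * s) = K * A * s := by ring
              _ ≤ s ^ (1 - b) * (A * V ^ b) := h1
              _ = A * (s ^ (1 - b) * V ^ b) := by ring
          have h3 : K * s ≤ s ^ (1 - b) * V ^ b := (ENNReal.mul_le_mul_iff_right hA0 hAtop).mp h2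
          have hss : s = s ^ b * s ^ (1 - b) := by
            conv_lhs => rw [← ENNReal.rpow_one s, show (1:ℝ) = b + (1 - b) by ring,
              ENNReal.rpow_add _ _ h hstop]
          have hs1b0 : s ^ (1 - b) ≠ 0 :=
            (ENNReal.rpow_pos (zero_lt_iff.mpr h) hstop).ne'
          have hs1bt : s ^ (1 - b) ≠ ∞ :=
            ENNReal.rpow_ne_top_of_nonneg (by linarith) hstop
          have h4 : (K * s ^ b) * s ^ (1 - b) ≤ V ^ b * s ^ (1 - b) := by
            calc (K * s ^ b) * s ^ (1 - b) = K * (s ^ b * s ^ (1 - b)) := by ring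
              _ = K * s := by rw [← hss]
              _ ≤ s ^ (1 - b) * V ^ b := h3
              _ = V ^ b * s ^ (1 - b) := mul_comm _ _
          have h5 : K * s ^ b ≤ V ^ b := (ENNReal.mul_le_mul_iff_left hs1b0 hs1bt).mp h4
          have h6 : ((2:ℝ≥0∞) * s) ^ b ≤ V ^ b := by
            rw [ENNReal.mul_rpow_of_nonneg _ _ hb0, ← hKrpow]
            exact h5
          have h7 : (2:ℝ≥0∞) * s ≤ V := (ENNReal.rpow_le_rpow_iff hbpos).mp h6
          rw [ENNReal.le_div_iff_mul_le (Or.inl (by norm_num)) (Or.inl (by norm_num))]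
          rw [mul_comm]
          exact h7
      have hhalfpow : s ^ (1 - b) ≤ V ^ (1 - b) * K₂ := by
        calc s ^ (1 - b) ≤ (V / 2) ^ (1 - b) := ENNReal.rpow_le_rpow hs_half (by linarith)
          _ = V ^ (1 - b) * K₂ := by
              rw [ENNReal.div_rpow_of_nonneg _ _ (by linarith : (0:ℝ) ≤ 1 - b),
                div_eq_mul_inv, ← ENNReal.rpow_neg, neg_sub, hK₂rpow]
      have hB2 : ∑ J ∈ G, μ J * ∏ i, (avg μ J (w i)) ^ β i
          ≤ K₂ * ((V ^ (1 - b) * TT) * η⁻¹) := by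
        calc ∑ J ∈ G, μ J * ∏ i, (avg μ J (w i)) ^ β i
            = ∑ J ∈ G, (μ J ^ (1 - b) * ∏ i, (∫⁻ x in J, w i x ∂μ) ^ β i) := hsum_eq
          _ ≤ s ^ (1 - b) * TT := hHold
          _ ≤ (V ^ (1 - b) * K₂) * TT := mul_le_mul_left hhalfpow _
          _ = K₂ * (V ^ (1 - b) * TT) := by ring
          _ ≤ K₂ * ((V ^ (1 - b) * TT) * η⁻¹) := by
              refine mul_le_mul_right ?_ _
              conv_lhs => rw [← mul_one (V ^ (1 - b) * TT)]
              exact mul_le_mul_right hηinv _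
      -- choice of maximal cube for each cube of F₂
      have hjex : ∀ P : Set X, ∃ J, (P ∈ F₂ → J ∈ G ∧ P ⊆ J) ∧ (P ∈ G → J = P) := by
        intro P
        by_cases hPG : P ∈ G
        · exact ⟨P, fun _ => ⟨hPG, subset_rfl⟩, fun _ => rfl⟩
        by_cases hPF : P ∈ F₂
        · obtain ⟨J, hJG, hPJ⟩ := hGmax P hPF
          exact ⟨J, fun _ => ⟨hJG, hPJ⟩, fun h => absurd h hPG⟩
        · exact ⟨P, fun h => absurd h hPF, fun _ => rfl⟩
      choose j hj1 hj2 using hjex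
      have hjmap : ∀ P ∈ F₂, j P ∈ G := fun P hP => (hj1 P hP).1
      have hfib_split : ∑ P ∈ F₂, μ P * ∏ i, (avg μ P (w i)) ^ β i
          = (∑ J ∈ G, μ J * ∏ i, (avg μ J (w i)) ^ β i)
            + ∑ J ∈ G, ∑ P ∈ (F₂.filter (fun P => j P = J)).erase J,
                μ P * ∏ i, (avg μ P (w i)) ^ β i := by
        rw [← Finset.sum_fiberwise_of_maps_to hjmap
          (fun P => μ P * ∏ i, (avg μ P (w i)) ^ β i), ← Finset.sum_add_distrib]
        refine Finset.sum_congr rfl fun J hJ => ?_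
        have hJfib : J ∈ F₂.filter (fun P => j P = J) :=
          Finset.mem_filter.mpr ⟨hGsub hJ, hj2 J hJ⟩
        exact (Finset.add_sum_erase _ _ hJfib).symm
      have hB3 : ∑ J ∈ G, ∑ P ∈ (F₂.filter (fun P => j P = J)).erase J,
            μ P * ∏ i, (avg μ P (w i)) ^ β i
          ≤ (c * K₂) * ((V ^ (1 - b) * TT) * η⁻¹) := by
        have hstep : ∀ J ∈ G, ∑ P ∈ (F₂.filter (fun P => j P = J)).erase J,
              μ P * ∏ i, (avg μ P (w i)) ^ β i
            ≤ c / η * (μ J ^ (1 - b) * ∏ i, (∫⁻ x in J, w i x ∂μ) ^ β i) := by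
          intro J hJ
          have hJF : J ∈ F := hGF hJ
          have hsubF : (F₂.filter (fun P => j P = J)).erase J ⊆ F.erase J :=
            Finset.erase_subset_erase J ((Finset.filter_subset _ _).trans hF₂sub)
          have hcard' : ((F₂.filter (fun P => j P = J)).erase J).card ≤ n := by
            calc ((F₂.filter (fun P => j P = J)).erase J).card
                ≤ (F.erase J).card := Finset.card_le_card hsubF
              _ = F.card - 1 := Finset.card_erase_of_mem hJF
              _ ≤ n := by omega
          refine ih _ hcard' J (hJtopall J hJ) ?_ ?_
          · intro P hP
            exact hF𝒮 P (hF₂sub (Finset.mem_filter.mp (Finset.mem_of_mem_erase hP)).1)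
          · intro P hP
            have hPfib := Finset.mem_filter.mp (Finset.mem_of_mem_erase hP)
            have := (hj1 P hPfib.1).2
            rwa [hPfib.2] at this
        calc ∑ J ∈ G, ∑ P ∈ (F₂.filter (fun P => j P = J)).erase J,
              μ P * ∏ i, (avg μ P (w i)) ^ β i
            ≤ ∑ J ∈ G, c / η * (μ J ^ (1 - b) * ∏ i, (∫⁻ x in J, w i x ∂μ) ^ β i) :=
              Finset.sum_le_sum hstep
          _ = c / η * ∑ J ∈ G, (μ J ^ (1 - b) * ∏ i, (∫⁻ x in J, w i x ∂μ) ^ β i) := by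
              rw [Finset.mul_sum]
          _ ≤ c / η * (s ^ (1 - b) * TT) := mul_le_mul_right hHold _
          _ ≤ c / η * ((V ^ (1 - b) * K₂) * TT) :=
              mul_le_mul_right (mul_le_mul_left hhalfpow _) _
          _ = (c * K₂) * ((V ^ (1 - b) * TT) * η⁻¹) := by
              rw [div_eq_mul_inv]; ring
      calc ∑ P ∈ F, μ P * ∏ i, (avg μ P (w i)) ^ β i
          = (∑ P ∈ F₁, μ P * ∏ i, (avg μ P (w i)) ^ β i)
            + ∑ P ∈ F₂, μ P * ∏ i, (avg μ P (w i)) ^ β i :=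
            (Finset.sum_filter_add_sum_filter_not F _ _).symm
        _ = (∑ P ∈ F₁, μ P * ∏ i, (avg μ P (w i)) ^ β i)
            + ((∑ J ∈ G, μ J * ∏ i, (avg μ J (w i)) ^ β i)
              + ∑ J ∈ G, ∑ P ∈ (F₂.filter (fun P => j P = J)).erase J,
                  μ P * ∏ i, (avg μ P (w i)) ^ β i) := by rw [hfib_split]
        _ ≤ K * ((V ^ (1 - b) * TT) * η⁻¹)
            + (K₂ * ((V ^ (1 - b) * TT) * η⁻¹) + (c * K₂) * ((V ^ (1 - b) * TT) * η⁻¹)) :=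
            add_le_add hB1 (add_le_add hB2 hB3)
        _ = (K + K₂ + c * K₂) * ((V ^ (1 - b) * TT) * η⁻¹) := by ring
        _ ≤ c * ((V ^ (1 - b) * TT) * η⁻¹) := mul_le_mul_left hKKc _
        _ = c / η * (V ^ (1 - b) * TT) := by rw [div_eq_mul_inv]; ring

/-- Sparse packing for products of averages with total exponent `β < 1`:
if `𝒮` is an `η`-sparse family of subcubes of `Q`, then
`Σ_{Q' ∈ 𝒮} μ(Q') Πᵢ ⟨wᵢ⟩_{Q'}^{βᵢ}
  ≤ (C/η) max(1/β, 1/(1-β)) μ(Q) Πᵢ ⟨wᵢ⟩_Q^{βᵢ}`, with `C` absolute. -/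
theorem sparse_sum_products_of_averages :
    ∃ C : ℝ≥0∞, 0 < C ∧ C ≠ ∞ ∧
      ∀ (X : Type) [MeasurableSpace X] (μ : Measure X) [NullSingletonClass μ]
        (𝒟 : Set (Set X)),
        (∀ Q ∈ 𝒟, MeasurableSet Q) →
        (∀ Q ∈ 𝒟, ∀ Q' ∈ 𝒟, Q ⊆ Q' ∨ Q' ⊆ Q ∨ Disjoint Q Q') →
        ∀ (m : ℕ) (β : Fin m → ℝ), (∀ i, 0 < β i) → (∑ i, β i) < 1 →
        ∀ Q ∈ 𝒟, 0 < μ Q → μ Q < ∞ →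
        ∀ (𝒮 : Set (Set X)), 𝒮 ⊆ {Q' ∈ 𝒟 | Q' ⊆ Q} →
        ∀ (η : ℝ≥0∞), 0 < η →
        ∀ E : Set X → Set X,
        (∀ Q' ∈ 𝒮, E Q' ⊆ Q' ∧ MeasurableSet (E Q') ∧ η * μ Q' ≤ μ (E Q')) →
        (∀ Q' ∈ 𝒮, ∀ Q'' ∈ 𝒮, Q' ≠ Q'' → Disjoint (E Q') (E Q'')) →
        ∀ w : Fin m → X → ℝ≥0∞, (∀ i, Measurable (w i)) →
        (∑' Q' : 𝒮, μ (Q' : Set X) * ∏ i, (avg μ Q' (w i)) ^ β i)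
          ≤ C / η * ENNReal.ofReal (max (1 / ∑ i, β i) (1 / (1 - ∑ i, β i))) *
              μ Q * ∏ i, (avg μ Q (w i)) ^ β i := by
  refine ⟨6, by norm_num, by norm_num, ?_⟩
  intro X _ μ _ 𝒟 h𝒟m h𝒟n m β hβpos hβ1 Q hQ𝒟 hQ0 hQtop 𝒮 h𝒮 η hη E hE hEdisj w hw
  by_cases hη1 : η ≤ 1
  · have hη0 : η ≠ 0 := hη.ne'
    refine Summable.tsum_le_of_sum_le ENNReal.summable ?_
    intro u
    have hsum_eq : ∑ a ∈ u, μ (a : Set X) * ∏ i, (avg μ (a : Set X) (w i)) ^ β i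
        = ∑ P ∈ u.image Subtype.val, μ P * ∏ i, (avg μ P (w i)) ^ β i :=
      (Finset.sum_image (f := fun P => μ P * ∏ i, (avg μ P (w i)) ^ β i)
        (fun x _ y _ h => Subtype.val_injective h)).symm
    have hF𝒮 : ∀ P ∈ u.image Subtype.val, P ∈ 𝒮 := by
      intro P hP
      obtain ⟨a, _, rfl⟩ := Finset.mem_image.mp hP
      exact a.2
    have hFQ : ∀ P ∈ u.image Subtype.val, P ⊆ Q :=
      fun P hP => (h𝒮 (hF𝒮 P hP)).2
    have hkey := key_lemma μ h𝒟m h𝒟n hβpos hβ1 (fun P hP => (h𝒮 hP).1) hη0 hη1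
      hE hEdisj w (u.image Subtype.val).card (u.image Subtype.val) le_rfl Q
      hQtop.ne hF𝒮 hFQ
    rw [hsum_eq]
    refine hkey.trans ?_
    have heq := eq1_aux μ β (fun i => (hβpos i).le) hβ1 w (P := Q) hQtop.ne
    rw [← heq]
    have hcle : ENNReal.ofReal (6 / (1 - ∑ i, β i))
        ≤ 6 * ENNReal.ofReal (max (1 / ∑ i, β i) (1 / (1 - ∑ i, β i))) := by
      have h1 : (6:ℝ) / (1 - ∑ i, β i) = 6 * (1 / (1 - ∑ i, β i)) := by ring
      rw [h1, ENNReal.ofReal_mul (by norm_num), ENNReal.ofReal_ofNat]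
      exact mul_le_mul_right (ENNReal.ofReal_le_ofReal (le_max_right _ _)) _
    calc ENNReal.ofReal (6 / (1 - ∑ i, β i)) / η * (μ Q * ∏ i, (avg μ Q (w i)) ^ β i)
        ≤ (6 * ENNReal.ofReal (max (1 / ∑ i, β i) (1 / (1 - ∑ i, β i)))) / η *
            (μ Q * ∏ i, (avg μ Q (w i)) ^ β i) :=
          mul_le_mul_left (ENNReal.div_le_div_right hcle η) _
      _ = 6 / η * ENNReal.ofReal (max (1 / ∑ i, β i) (1 / (1 - ∑ i, β i))) * μ Q *
            ∏ i, (avg μ Q (w i)) ^ β i := by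
          simp only [div_eq_mul_inv]; ring
  · push_neg at hη1
    have hzero : ∀ Q' : ↥𝒮, μ (Q' : Set X) * ∏ i, (avg μ (Q' : Set X) (w i)) ^ β i = 0 := by
      intro Q'
      have hmem := h𝒮 Q'.2
      have hfin : μ (Q' : Set X) < ∞ := (measure_mono hmem.2).trans_lt hQtop
      have hEle : μ (E (Q' : Set X)) ≤ μ (Q' : Set X) := measure_mono (hE _ Q'.2).1
      have hggr := (hE _ Q'.2).2.2
      have hμ0 : μ (Q' : Set X) = 0 := by
        by_contra hne
        have hlt : μ (Q' : Set X) < η * μ (Q' : Set X) := by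
          conv_lhs => rw [← one_mul (μ (Q' : Set X))]
          exact (ENNReal.mul_lt_mul_iff_left hne hfin.ne).mpr hη1
        exact absurd (hlt.trans_le (hggr.trans hEle)) (lt_irrefl _)
      simp [hμ0]
    rw [ENNReal.tsum_eq_zero.mpr hzero]
    exact zero_le
end
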